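/- arXiv:2503.07134 — 4 statements merged into one kernel-verified Lean document; each statement's English description precedes it below -/
import Mathlib

section
/- Let M be a nonempty closed subset of a Banach space X, let (a_n) be a sequence of positive reals with a convergent series, and let A : M → M satisfy ‖Aⁿx − Aⁿy‖ ≤ a_n·‖x − y‖ for all x, y ∈ M and all n ∈ ℕ. Then A has exactly one fixed point x ∈ M, this fixed point is the limit of the iteration x_n = A x_{n−1} for any starting point x₀ ∈ M, and the error estimate ‖x − x_n‖ ≤ (∑_{k≥n} a_k)·‖x₁ − x₀‖ holds. -/
/-- Weissinger's fixed point theorem. -/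
theorem weissinger_fixed_point
    {X : Type*} [NormedAddCommGroup X] [NormedSpace ℝ X] [CompleteSpace X]
    (M : Set X) (hM : M.Nonempty) (hMc : IsClosed M)
    (a : ℕ → ℝ) (ha_pos : ∀ n, 0 < a n) (ha_sum : Summable a)
    (A : X → X) (hA : Set.MapsTo A M M)
    (hcontr : ∀ x ∈ M, ∀ y ∈ M, ∀ n : ℕ, ‖A^[n] x - A^[n] y‖ ≤ a n * ‖x - y‖) :
    ∃ x ∈ M, A x = x ∧ (∀ y ∈ M, A y = y → y = x) ∧
      ∀ x₀ ∈ M,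
        Filter.Tendsto (fun n => A^[n] x₀) Filter.atTop (nhds x) ∧
        ∀ n : ℕ, ‖x - A^[n] x₀‖ ≤ (∑' k : ℕ, a (n + k)) * ‖A x₀ - x₀‖ := by
  obtain ⟨x₀, hx₀⟩ := hM
  have hmem : ∀ x ∈ M, ∀ n : ℕ, A^[n] x ∈ M := fun x hx n => hA.iterate n hx
  -- telescoping estimate
  have htel : ∀ z ∈ M, ∀ n j : ℕ,
      ‖A^[n + j] z - A^[n] z‖ ≤ (∑ k ∈ Finset.range j, a (n + k)) * ‖A z - z‖ := by
    intro z hz n j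
    induction j with
    | zero => simp
    | succ j ih =>
      have h1 : ‖A^[n + (j + 1)] z - A^[n + j] z‖ ≤ a (n + j) * ‖A z - z‖ := by
        have : A^[n + (j + 1)] z = A^[n + j] (A z) := by
          rw [show n + (j + 1) = (n + j) + 1 by omega, Function.iterate_succ_apply]
        rw [this]
        exact hcontr (A z) (hA hz) z hz (n + j)
      calc ‖A^[n + (j + 1)] z - A^[n] z‖
          ≤ ‖A^[n + (j + 1)] z - A^[n + j] z‖ + ‖A^[n + j] z - A^[n] z‖ :=
            norm_sub_le_norm_sub_add_norm_sub _ _ _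
        _ ≤ a (n + j) * ‖A z - z‖ + (∑ k ∈ Finset.range j, a (n + k)) * ‖A z - z‖ :=
            add_le_add h1 ih
        _ = (∑ k ∈ Finset.range (j + 1), a (n + k)) * ‖A z - z‖ := by
            rw [Finset.sum_range_succ]; ring
  have ha_tail : ∀ n : ℕ, Summable fun k => a (n + k) :=
    fun n => by simpa [Nat.add_comm] using (summable_nat_add_iff n).2 ha_sum
  -- Cauchy sequence
  have hcau : CauchySeq fun n => A^[n] x₀ := by
    apply cauchySeq_of_dist_le_of_summable (fun n => a n * ‖x₀ - A x₀‖)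
    · intro n
      rw [dist_eq_norm]
      have : A^[n + 1] x₀ = A^[n] (A x₀) := Function.iterate_succ_apply A n x₀
      rw [this]
      exact hcontr x₀ hx₀ (A x₀) (hA hx₀) n
    · exact ha_sum.mul_right _
  obtain ⟨x, hx⟩ := cauchySeq_tendsto_of_complete hcau
  have hxM : x ∈ M := hMc.mem_of_tendsto hx (Filter.Eventually.of_forall fun n => hmem x₀ hx₀ n)
  -- norm convergence helper
  have hnorm0 : Filter.Tendsto (fun n => ‖A^[n] x₀ - x‖) Filter.atTop (nhds 0) := by
    have := (hx.sub (tendsto_const_nhds (x := x))).norm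
    simpa using this
  -- fixed point
  have hfix : A x = x := by
    have h1 : Filter.Tendsto (fun n => A (A^[n] x₀)) Filter.atTop (nhds x) := by
      have := hx.comp (Filter.tendsto_add_atTop_nat 1)
      simpa [Function.comp_def, Function.iterate_succ_apply'] using this
    have h2 : Filter.Tendsto (fun n => A (A^[n] x₀)) Filter.atTop (nhds (A x)) := by
      rw [tendsto_iff_norm_sub_tendsto_zero]
      apply squeeze_zero (fun n => norm_nonneg _) (g := fun n => a 1 * ‖A^[n] x₀ - x‖)
      · intro n
        have := hcontr (A^[n] x₀) (hmem x₀ hx₀ n) x hxM 1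
        simpa using this
      · simpa using hnorm0.const_mul (a 1)
    exact tendsto_nhds_unique h2 h1
  -- uniqueness
  have huniq : ∀ y ∈ M, A y = y → y = x := by
    intro y hy hAy
    by_contra hne
    have hpos : 0 < ‖y - x‖ := by
      rw [norm_pos_iff, sub_ne_zero]; exact hne
    have ha0 : Filter.Tendsto a Filter.atTop (nhds 0) := ha_sum.tendsto_atTop_zero
    obtain ⟨n, hn⟩ := (ha0.eventually (gt_mem_nhds (by norm_num : (0:ℝ) < 1/2))).exists
    have h1 : ‖y - x‖ ≤ a n * ‖y - x‖ := by
      have := hcontr y hy x hxM n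
      rwa [Function.iterate_fixed hAy, Function.iterate_fixed hfix] at this
    nlinarith
  refine ⟨x, hxM, hfix, huniq, ?_⟩
  intro z hz
  have hconv : Filter.Tendsto (fun n => A^[n] z) Filter.atTop (nhds x) := by
    rw [tendsto_iff_norm_sub_tendsto_zero]
    apply squeeze_zero (fun n => norm_nonneg _) (g := fun n => a n * ‖z - x‖)
    · intro n
      have := hcontr z hz x hxM n
      rwa [Function.iterate_fixed hfix] at this
    · simpa using ha_sum.tendsto_atTop_zero.mul_const ‖z - x‖
  refine ⟨hconv, fun n => ?_⟩
  have hbd : ∀ j : ℕ, ‖A^[n + j] z - A^[n] z‖ ≤ (∑' k : ℕ, a (n + k)) * ‖A z - z‖ := by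
    intro j
    refine (htel z hz n j).trans (mul_le_mul_of_nonneg_right ?_ (norm_nonneg _))
    exact Summable.sum_le_tsum (Finset.range j) (fun k _ => (ha_pos (n + k)).le) (ha_tail n)
  have hlim : Filter.Tendsto (fun j => ‖A^[n + j] z - A^[n] z‖) Filter.atTop
      (nhds ‖x - A^[n] z‖) := by
    have h1 : Filter.Tendsto (fun j => A^[n + j] z) Filter.atTop (nhds x) := by
      have := hconv.comp (Filter.tendsto_add_atTop_nat n)
      simpa [Function.comp_def, Nat.add_comm] using this
    exact (h1.sub tendsto_const_nhds).norm
  exact le_of_tendsto hlim (Filter.Eventually.of_forall hbd)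
end

section
/- Let A : [0,∞) → ℝ^{n×n} and a : [0,∞) → ℝⁿ be piecewise continuous on every finite interval, with t ↦ ‖A(t)‖ and t ↦ |a(t)| integrable over [0,∞). Then for every ζ ∈ ℝⁿ and every τ ∈ [0,∞] there exists a unique solution x of ẋ(t) = A(t)x(t) + a(t) with x(τ) = ζ (where x(∞) means lim_{t→∞} x(t)); in particular the solution is bounded and has a limit at infinity. -/
open MeasureTheory Set Filter intervalIntegral
set_option maxHeartbeats 1000000

/-- `f` is piecewise continuous on `[a,b]`. -/
def PiecewiseContinuousOn {E : Type*} [NormedAddCommGroup E]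
    (f : ℝ → E) (a b : ℝ) : Prop :=
  ∃ s : Finset ℝ,
    (∀ t ∈ Set.Icc a b, t ∉ s → ContinuousWithinAt f (Set.Icc a b) t) ∧
    (∀ t ∈ s, ∃ L : E, Filter.Tendsto f (nhdsWithin t (Set.Iio t)) (nhds L)) ∧
    (∀ t ∈ s, ContinuousWithinAt f (Set.Ici t) t)

lemma pc_aesm {E : Type*} [NormedAddCommGroup E]
    {f : ℝ → E} (hpc : ∀ T : ℝ, PiecewiseContinuousOn f 0 T) :
    AEStronglyMeasurable f (volume.restrict (Set.Ici (0:ℝ))) := by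
  choose s hs _ _ using fun N : ℕ => hpc N
  set S : Set ℝ := (⋃ N : ℕ, ((s N : Set ℝ))) ∪ {0} with hS
  have hSc : S.Countable :=
    (Set.countable_iUnion fun N => (s N).countable_toSet).union (Set.countable_singleton 0)
  have hE : ContinuousOn f (Set.Ici 0 \ S) := by
    intro t ht
    have ht0 : 0 < t := lt_of_le_of_ne ht.1 fun h => ht.2 (Or.inr (by simp [← h]))
    obtain ⟨N, hN⟩ := exists_nat_gt t
    have h1 : ContinuousWithinAt f (Set.Icc 0 N) t :=
      hs N t ⟨ht.1, hN.le⟩ (fun hmem => ht.2 (Or.inl (Set.mem_iUnion.2 ⟨N, hmem⟩)))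
    have hnb : Set.Icc (0:ℝ) N ∈ nhds t := Icc_mem_nhds ht0 hN
    exact (h1.continuousAt hnb).continuousWithinAt
  have hme : MeasurableSet (Set.Ici (0:ℝ) \ S) :=
    measurableSet_Ici.diff hSc.measurableSet
  have h0 : (Set.Ici (0:ℝ) \ S : Set ℝ) =ᵐ[volume] Set.Ici (0:ℝ) :=
    MeasureTheory.diff_ae_eq_self.2 (by
      exact measure_mono_null (Set.inter_subset_right : Set.Ici 0 ∩ S ⊆ S) (hSc.measure_zero _))
  have : AEStronglyMeasurable f (volume.restrict (Set.Ici 0 \ S)) := hE.aestronglyMeasurable hme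
  rwa [Measure.restrict_congr_set h0] at this

lemma aesm_apply {𝕜 E F : Type*} [NontriviallyNormedField 𝕜] [NormedAddCommGroup E]
    [NormedSpace 𝕜 E] [NormedAddCommGroup F] [NormedSpace 𝕜 F]
    {α : Type*} [MeasurableSpace α] {μ : Measure α}
    {A : α → (E →L[𝕜] F)} {x : α → E}
    (hA : AEStronglyMeasurable A μ) (hx : AEStronglyMeasurable x μ) :
    AEStronglyMeasurable (fun s => A s (x s)) μ :=
  (isBoundedBilinearMap_apply (𝕜 := 𝕜) (E := E) (F := F)).continuous.comp_aestronglyMeasurable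
    (hA.prodMk hx)


section integrals
variable {V : Type*} [NormedAddCommGroup V] [NormedSpace ℝ V]

lemma split_Ici {g : ℝ → V} (hg : IntegrableOn g (Set.Ici (0:ℝ))) {t : ℝ} (ht : 0 ≤ t) :
    ∫ s in Set.Ici (0:ℝ), g s = (∫ s in (0:ℝ)..t, g s) + ∫ s in Set.Ici t, g s := by
  rw [integral_Ici_eq_integral_Ioi, integral_Ici_eq_integral_Ioi,
    intervalIntegral.integral_of_le ht,
    ← MeasureTheory.setIntegral_union (Set.Ioc_disjoint_Ioi le_rfl) measurableSet_Ioi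
      (hg.mono_set (fun s hs => le_of_lt hs.1)) (hg.mono_set (fun s hs => le_trans ht (le_of_lt hs))),
    Set.Ioc_union_Ioi_eq_Ioi ht]

lemma tail_tendsto [CompleteSpace V] {g : ℝ → V} (hg : IntegrableOn g (Set.Ici (0:ℝ))) :
    Tendsto (fun t => ∫ s in Set.Ici t, g s) atTop (nhds 0) := by
  have h1 : Tendsto (fun t : ℝ => ∫ s in (0:ℝ)..t, g s) atTop
      (nhds (∫ s in Set.Ioi (0:ℝ), g s)) :=
    MeasureTheory.intervalIntegral_tendsto_integral_Ioi 0
      (hg.mono_set (fun s hs => Set.mem_Ici.2 (le_of_lt (Set.mem_Ioi.1 hs)))) tendsto_id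
  have h2 : Tendsto (fun t : ℝ => (∫ s in Set.Ici (0:ℝ), g s) - ∫ s in (0:ℝ)..t, g s)
      atTop (nhds 0) := by
    rw [integral_Ici_eq_integral_Ioi]
    simpa using (tendsto_const_nhds (x := ∫ s in Set.Ioi (0:ℝ), g s)).sub h1
  refine h2.congr' ?_
  filter_upwards [eventually_ge_atTop (0:ℝ)] with t ht
  rw [split_Ici hg ht]; abel

end integrals

lemma weight_package (f : ℝ → ℝ) (hf0 : ∀ s, 0 ≤ f s) (hfi : IntegrableOn f (Set.Ici (0:ℝ)))
    (δ : ℝ) (hδ : 0 < δ) (N : ℕ)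
    (H1 : ∀ c d : ℝ, 0 ≤ c → c ≤ d → d ≤ c + δ → ∫ s in Set.Ioc c d, f s ≤ 1/2)
    (H2 : ∫ s in Set.Ici ((N:ℝ)*δ), f s ≤ 1/2) :
    ∃ W Vw : ℝ → ℝ, Monotone W ∧ Antitone Vw ∧ (∀ t, 1 ≤ W t) ∧ (∀ t, W t ≤ 4^N) ∧
      (∀ t, 1 ≤ Vw t) ∧ (∀ t, Vw t ≤ 4^N) ∧
      IntegrableOn (fun s => f s * W s) (Set.Ici 0) ∧
      IntegrableOn (fun s => f s * Vw s) (Set.Ici 0) ∧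
      (∀ t, 0 ≤ t → ∫ s in Set.Ioc 0 t, f s * W s ≤ 2/3 * W t) ∧
      (∀ t, 0 ≤ t → ∫ s in Set.Ici t, f s * Vw s ≤ 2/3 * Vw t) := by
  set k : ℝ → ℕ := fun t => min ⌊t/δ⌋₊ N with hk
  set W : ℝ → ℝ := fun t => (4:ℝ)^(k t) with hW
  set Vw : ℝ → ℝ := fun t => (4:ℝ)^(N - k t) with hV
  have hk_mono : Monotone k := fun a b hab =>
    min_le_min (Nat.floor_le_floor (by gcongr)) le_rfl
  have hkN : ∀ t, k t ≤ N := fun t => min_le_right _ _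
  have hWmono : Monotone W := fun a b hab => pow_le_pow_right₀ (by norm_num) (hk_mono hab)
  have hVanti : Antitone Vw := fun a b hab =>
    pow_le_pow_right₀ (by norm_num) (Nat.sub_le_sub_left (hk_mono hab) N)
  have hW1 : ∀ t, 1 ≤ W t := fun t => one_le_pow₀ (by norm_num : (1:ℝ) ≤ 4)
  have hWB : ∀ t, W t ≤ 4^N := fun t => pow_le_pow_right₀ (by norm_num) (hkN t)
  have hV1 : ∀ t, 1 ≤ Vw t := fun t => one_le_pow₀ (by norm_num : (1:ℝ) ≤ 4)
  have hVB : ∀ t, Vw t ≤ 4^N := fun t => pow_le_pow_right₀ (by norm_num) (Nat.sub_le _ _)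
  have hWint : IntegrableOn (fun s => f s * W s) (Set.Ici 0) := by
    have := Integrable.bdd_mul (c := (4:ℝ)^N) hfi hWmono.measurable.aestronglyMeasurable
      (Filter.Eventually.of_forall fun s => by
        rw [Real.norm_eq_abs, abs_of_nonneg (le_trans zero_le_one (hW1 s))]; exact hWB s)
    exact this.congr (Filter.Eventually.of_forall fun s => mul_comm _ _)
  have hVint : IntegrableOn (fun s => f s * Vw s) (Set.Ici 0) := by
    have := Integrable.bdd_mul (c := (4:ℝ)^N) hfi hVanti.measurable.aestronglyMeasurable
      (Filter.Eventually.of_forall fun s => by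
        rw [Real.norm_eq_abs, abs_of_nonneg (le_trans zero_le_one (hV1 s))]; exact hVB s)
    exact this.congr (Filter.Eventually.of_forall fun s => mul_comm _ _)
  have hfW0 : ∀ s, 0 ≤ f s * W s := fun s =>
    mul_nonneg (hf0 s) (le_trans zero_le_one (hW1 s))
  have hfV0 : ∀ s, 0 ≤ f s * Vw s := fun s =>
    mul_nonneg (hf0 s) (le_trans zero_le_one (hV1 s))
  have hfl : ∀ t : ℝ, 0 ≤ t → ((⌊t/δ⌋₊:ℝ)*δ ≤ t ∧ t < ((⌊t/δ⌋₊:ℝ)+1)*δ) := by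
    intro t ht
    have h1 := Nat.floor_le (div_nonneg ht hδ.le)
    have h2 := Nat.lt_floor_add_one (t/δ)
    constructor
    · calc ((⌊t/δ⌋₊:ℝ))*δ ≤ (t/δ)*δ := by nlinarith
        _ = t := by field_simp
    · calc t = (t/δ)*δ := by field_simp
        _ < ((⌊t/δ⌋₊:ℝ)+1)*δ := by nlinarith
  have hk_small : ∀ (i : ℕ) (s : ℝ), 0 ≤ s → s < ((i:ℝ)+1)*δ → k s ≤ i := by
    intro i s hs hlt
    have h1 : s/δ < (i:ℝ)+1 := by rw [div_lt_iff₀ hδ]; linarith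
    have hfloor : ⌊s/δ⌋₊ < i+1 :=
      (Nat.floor_lt (div_nonneg hs hδ.le)).2 (by push_cast; linarith)
    exact le_trans (min_le_left _ _) (by omega)
  have hk_big : ∀ (i : ℕ) (s : ℝ), i ≤ N → ((i:ℝ))*δ ≤ s → i ≤ k s := by
    intro i s hiN hle
    have h1 : (i:ℝ) ≤ s/δ := by rw [le_div_iff₀ hδ]; linarith
    have : i ≤ ⌊s/δ⌋₊ := Nat.le_floor h1
    exact le_min this hiN
  have hgeom : ∀ K : ℕ, (∑ i ∈ Finset.range K, (4:ℝ)^i) = ((4:ℝ)^K - 1)/3 := by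
    intro K; rw [geom_sum_eq (by norm_num : (4:ℝ) ≠ 1)]; norm_num
  -- the inductive block estimate, forward
  have hQ : ∀ K : ℕ, K ≤ N →
      ∫ s in Set.Ico 0 ((K:ℝ)*δ), f s * W s ≤ (∑ i ∈ Finset.range K, (4:ℝ)^i) * (1/2) := by
    intro K
    induction K with
    | zero => intro _; simp
    | succ K ih =>
      intro hKN
      have hK : K ≤ N := by omega
      have h0K : (0:ℝ) ≤ (K:ℝ)*δ := by positivity
      have hKK : ((K:ℝ))*δ ≤ ((K:ℝ)+1)*δ := by nlinarith
      have hsub1 : Set.Ico (0:ℝ) ((K:ℝ)*δ) ⊆ Set.Ici (0:ℝ) := fun s hs => hs.1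
      have hsub2 : Set.Ico ((K:ℝ)*δ) (((K:ℝ)+1)*δ) ⊆ Set.Ici (0:ℝ) :=
        fun s hs => le_trans h0K hs.1
      have hcast : (((K:ℕ)+1 : ℕ):ℝ)*δ = ((K:ℝ)+1)*δ := by push_cast; ring
      rw [hcast, ← Set.Ico_union_Ico_eq_Ico h0K hKK,
        MeasureTheory.setIntegral_union Set.Ico_disjoint_Ico_same measurableSet_Ico
          (hWint.mono_set hsub1) (hWint.mono_set hsub2), Finset.sum_range_succ]
      have hpiece : ∫ s in Set.Ico ((K:ℝ)*δ) (((K:ℝ)+1)*δ), f s * W s ≤ (4:ℝ)^K * (1/2) := by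
        have hb : ∫ s in Set.Ico ((K:ℝ)*δ) (((K:ℝ)+1)*δ), f s * W s
            ≤ ∫ s in Set.Ico ((K:ℝ)*δ) (((K:ℝ)+1)*δ), f s * (4:ℝ)^K := by
          refine MeasureTheory.setIntegral_mono_on (hWint.mono_set hsub2)
            ((hfi.mono_set hsub2).mul_const _) measurableSet_Ico ?_
          intro s hs
          refine mul_le_mul_of_nonneg_left ?_ (hf0 s)
          exact pow_le_pow_right₀ (by norm_num)
            (hk_small K s (le_trans h0K hs.1) hs.2)
        have hc : ∫ s in Set.Ico ((K:ℝ)*δ) (((K:ℝ)+1)*δ), f s ≤ 1/2 := by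
          rw [MeasureTheory.integral_Ico_eq_integral_Ioo,
            ← MeasureTheory.integral_Ioc_eq_integral_Ioo]
          exact H1 _ _ h0K hKK (by nlinarith)
        calc ∫ s in Set.Ico ((K:ℝ)*δ) (((K:ℝ)+1)*δ), f s * W s
            ≤ ∫ s in Set.Ico ((K:ℝ)*δ) (((K:ℝ)+1)*δ), f s * (4:ℝ)^K := hb
          _ = (∫ s in Set.Ico ((K:ℝ)*δ) (((K:ℝ)+1)*δ), f s) * (4:ℝ)^K :=
              MeasureTheory.integral_mul_const _ _
          _ ≤ (4:ℝ)^K * (1/2) := by nlinarith [pow_pos (by norm_num : (0:ℝ) < 4) K]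
      have := ih hK
      linarith
  -- M1
  have hM1 : ∀ t, 0 ≤ t → ∫ s in Set.Ioc 0 t, f s * W s ≤ 2/3 * W t := by
    intro t ht
    set K0 := ⌊t/δ⌋₊ with hK0
    have hfl1 := (hfl t ht).1
    have hfl2 := (hfl t ht).2
    have h0K : (0:ℝ) ≤ (K0:ℝ)*δ := by positivity
    rcases lt_or_ge K0 N with hc | hc
    · have hkt : k t = K0 := by
        simp only [hk]; rw [min_eq_left hc.le]
      have hWt : W t = (4:ℝ)^K0 := by rw [hW]; simp [hkt]
      have hsub1 : Set.Ioc (0:ℝ) ((K0:ℝ)*δ) ⊆ Set.Ici (0:ℝ) := fun s hs => hs.1.le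
      have hsub2 : Set.Ioc ((K0:ℝ)*δ) t ⊆ Set.Ici (0:ℝ) := fun s hs => le_trans h0K hs.1.le
      rw [← Set.Ioc_union_Ioc_eq_Ioc h0K hfl1,
        MeasureTheory.setIntegral_union (Set.Ioc_disjoint_Ioc_of_le le_rfl) measurableSet_Ioc
          (hWint.mono_set hsub1) (hWint.mono_set hsub2)]
      have hpart1 : ∫ s in Set.Ioc (0:ℝ) ((K0:ℝ)*δ), f s * W s
          ≤ (∑ i ∈ Finset.range K0, (4:ℝ)^i) * (1/2) := by
        rw [MeasureTheory.integral_Ioc_eq_integral_Ioo,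
          ← MeasureTheory.integral_Ico_eq_integral_Ioo]
        exact hQ K0 hc.le
      have hpart2 : ∫ s in Set.Ioc ((K0:ℝ)*δ) t, f s * W s ≤ (4:ℝ)^K0 * (1/2) := by
        have hb : ∫ s in Set.Ioc ((K0:ℝ)*δ) t, f s * W s
            ≤ ∫ s in Set.Ioc ((K0:ℝ)*δ) t, f s * (4:ℝ)^K0 := by
          refine MeasureTheory.setIntegral_mono_on (hWint.mono_set hsub2)
            ((hfi.mono_set hsub2).mul_const _) measurableSet_Ioc ?_
          intro s hs
          refine mul_le_mul_of_nonneg_left ?_ (hf0 s)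
          have : k s ≤ k t := hk_mono hs.2
          exact pow_le_pow_right₀ (by norm_num) (by omega)
        have hc2 : ∫ s in Set.Ioc ((K0:ℝ)*δ) t, f s ≤ 1/2 :=
          H1 _ _ h0K hfl1 (by nlinarith)
        calc ∫ s in Set.Ioc ((K0:ℝ)*δ) t, f s * W s
            ≤ ∫ s in Set.Ioc ((K0:ℝ)*δ) t, f s * (4:ℝ)^K0 := hb
          _ = (∫ s in Set.Ioc ((K0:ℝ)*δ) t, f s) * (4:ℝ)^K0 :=
              MeasureTheory.integral_mul_const _ _
          _ ≤ (4:ℝ)^K0 * (1/2) := by nlinarith [pow_pos (by norm_num : (0:ℝ) < 4) K0]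
      rw [hWt]
      have hg4 : (1:ℝ) ≤ (4:ℝ)^K0 := one_le_pow₀ (by norm_num)
      rw [hgeom] at hpart1
      linarith
    · have hkt : k t = N := by
        simp only [hk]; rw [min_eq_right hc]
      have hWt : W t = (4:ℝ)^N := by rw [hW]; simp [hkt]
      have htN : ((N:ℝ))*δ ≤ t := by
        refine le_trans ?_ hfl1
        have : (N:ℝ) ≤ (K0:ℝ) := by exact_mod_cast hc
        nlinarith
      have h0N : (0:ℝ) ≤ (N:ℝ)*δ := by positivity
      have hstep : ∫ s in Set.Ioc 0 t, f s * W s ≤ ∫ s in Set.Ici (0:ℝ), f s * W s := by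
        refine MeasureTheory.setIntegral_mono_set hWint
          (Filter.Eventually.of_forall fun s => hfW0 s) ?_
        exact (Set.Ioc_subset_Icc_self.trans Set.Icc_subset_Ici_self).eventuallyLE
      have hdecomp : ∫ s in Set.Ici (0:ℝ), f s * W s
          = (∫ s in Set.Ico (0:ℝ) ((N:ℝ)*δ), f s * W s)
            + ∫ s in Set.Ici ((N:ℝ)*δ), f s * W s := by
        have := MeasureTheory.setIntegral_union (μ := volume) (f := fun s => f s * W s)
          (s := Set.Ico (0:ℝ) ((N:ℝ)*δ)) (t := Set.Ici ((N:ℝ)*δ))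
          (Set.disjoint_left.2 fun s hs1 hs2 => absurd hs1.2 (not_lt.2 hs2))
          measurableSet_Ici (hWint.mono_set (fun s hs => hs.1))
          (hWint.mono_set (fun s hs => le_trans h0N hs))
        rwa [Set.Ico_union_Ici_eq_Ici h0N] at this
      have htail : ∫ s in Set.Ici ((N:ℝ)*δ), f s * W s ≤ (4:ℝ)^N * (1/2) := by
        have hsub : Set.Ici ((N:ℝ)*δ) ⊆ Set.Ici (0:ℝ) := fun s hs => le_trans h0N hs
        have hb : ∫ s in Set.Ici ((N:ℝ)*δ), f s * W s
            ≤ ∫ s in Set.Ici ((N:ℝ)*δ), f s * (4:ℝ)^N := by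
          refine MeasureTheory.setIntegral_mono_on (hWint.mono_set hsub)
            ((hfi.mono_set hsub).mul_const _) measurableSet_Ici ?_
          intro s hs
          exact mul_le_mul_of_nonneg_left (hWB s) (hf0 s)
        calc ∫ s in Set.Ici ((N:ℝ)*δ), f s * W s
            ≤ ∫ s in Set.Ici ((N:ℝ)*δ), f s * (4:ℝ)^N := hb
          _ = (∫ s in Set.Ici ((N:ℝ)*δ), f s) * (4:ℝ)^N :=
              MeasureTheory.integral_mul_const _ _
          _ ≤ (4:ℝ)^N * (1/2) := by nlinarith [pow_pos (by norm_num : (0:ℝ) < 4) N]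
      have hhead := hQ N le_rfl
      rw [hgeom] at hhead
      have hg4 : (1:ℝ) ≤ (4:ℝ)^N := one_le_pow₀ (by norm_num)
      rw [hWt]
      linarith
  -- the inductive block estimate, backward
  have hR : ∀ j : ℕ, j ≤ N →
      ∫ s in Set.Ici (((N-j : ℕ):ℝ)*δ), f s * Vw s
        ≤ (∑ l ∈ Finset.range (j+1), (4:ℝ)^l) * (1/2) := by
    intro j
    induction j with
    | zero =>
      intro _
      simp only [Nat.sub_zero, Finset.range_one, Finset.sum_singleton, pow_zero]
      have h0N : (0:ℝ) ≤ (N:ℝ)*δ := by positivity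
      have hsub : Set.Ici ((N:ℝ)*δ) ⊆ Set.Ici (0:ℝ) := fun s hs => le_trans h0N hs
      have hb : ∫ s in Set.Ici ((N:ℝ)*δ), f s * Vw s ≤ ∫ s in Set.Ici ((N:ℝ)*δ), f s := by
        refine MeasureTheory.setIntegral_mono_on (hVint.mono_set hsub)
          (hfi.mono_set hsub) measurableSet_Ici ?_
        intro s hs
        have hks : k s = N := by
          have := hk_big N s le_rfl hs
          have := hkN s
          omega
        have : Vw s = 1 := by rw [hV]; simp [hks]
        rw [this, mul_one]
      linarith [H2]
    | succ j ih =>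
      intro hjN
      have hj : j ≤ N := by omega
      have hmm : (N - j : ℕ) = (N - (j+1) : ℕ) + 1 := by omega
      have hcast : (((N-j : ℕ)):ℝ)*δ = ((((N-(j+1) : ℕ)):ℝ)+1)*δ := by
        rw [hmm]; push_cast; ring
      set m : ℕ := N - (j+1) with hm
      have h0m : (0:ℝ) ≤ (m:ℝ)*δ := by positivity
      have hmm1 : ((m:ℝ))*δ ≤ ((m:ℝ)+1)*δ := by nlinarith
      have hsubI : Set.Ici (((m:ℝ)+1)*δ) ⊆ Set.Ici (0:ℝ) :=
        fun s hs => le_trans (le_trans h0m hmm1) hs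
      have hsubC : Set.Ico ((m:ℝ)*δ) (((m:ℝ)+1)*δ) ⊆ Set.Ici (0:ℝ) :=
        fun s hs => le_trans h0m hs.1
      have hdec := MeasureTheory.setIntegral_union (μ := volume) (f := fun s => f s * Vw s)
          (s := Set.Ico ((m:ℝ)*δ) (((m:ℝ)+1)*δ)) (t := Set.Ici (((m:ℝ)+1)*δ))
          (Set.disjoint_left.2 fun s hs1 hs2 => absurd hs1.2 (not_lt.2 hs2))
          measurableSet_Ici (hVint.mono_set hsubC) (hVint.mono_set hsubI)
      rw [Set.Ico_union_Ici_eq_Ici hmm1] at hdec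
      rw [hdec]
      have hpiece : ∫ s in Set.Ico ((m:ℝ)*δ) (((m:ℝ)+1)*δ), f s * Vw s
          ≤ (4:ℝ)^(j+1) * (1/2) := by
        have hb : ∫ s in Set.Ico ((m:ℝ)*δ) (((m:ℝ)+1)*δ), f s * Vw s
            ≤ ∫ s in Set.Ico ((m:ℝ)*δ) (((m:ℝ)+1)*δ), f s * (4:ℝ)^(j+1) := by
          refine MeasureTheory.setIntegral_mono_on (hVint.mono_set hsubC)
            ((hfi.mono_set hsubC).mul_const _) measurableSet_Ico ?_
          intro s hs
          refine mul_le_mul_of_nonneg_left ?_ (hf0 s)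
          have hks : m ≤ k s := hk_big m s (by omega) hs.1
          exact pow_le_pow_right₀ (by norm_num) (by omega)
        have hc2 : ∫ s in Set.Ico ((m:ℝ)*δ) (((m:ℝ)+1)*δ), f s ≤ 1/2 := by
          rw [MeasureTheory.integral_Ico_eq_integral_Ioo,
            ← MeasureTheory.integral_Ioc_eq_integral_Ioo]
          exact H1 _ _ h0m hmm1 (by nlinarith)
        calc ∫ s in Set.Ico ((m:ℝ)*δ) (((m:ℝ)+1)*δ), f s * Vw s
            ≤ ∫ s in Set.Ico ((m:ℝ)*δ) (((m:ℝ)+1)*δ), f s * (4:ℝ)^(j+1) := hb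
          _ = (∫ s in Set.Ico ((m:ℝ)*δ) (((m:ℝ)+1)*δ), f s) * (4:ℝ)^(j+1) :=
              MeasureTheory.integral_mul_const _ _
          _ ≤ (4:ℝ)^(j+1) * (1/2) := by
              nlinarith [pow_pos (by norm_num : (0:ℝ) < 4) (j+1)]
      have hih : ∫ s in Set.Ici (((m:ℝ)+1)*δ), f s * Vw s
          ≤ (∑ l ∈ Finset.range (j+1), (4:ℝ)^l) * (1/2) := by
        have h2 := ih hj
        rw [hcast] at h2
        exact h2
      rw [Finset.sum_range_succ]
      linarith
  -- M2
  have hM2 : ∀ t, 0 ≤ t → ∫ s in Set.Ici t, f s * Vw s ≤ 2/3 * Vw t := by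
    intro t ht
    set K0 := ⌊t/δ⌋₊ with hK0
    have hfl1 := (hfl t ht).1
    have hfl2 := (hfl t ht).2
    rcases lt_or_ge K0 N with hc | hc
    · have hkt : k t = K0 := by simp only [hk]; rw [min_eq_left hc.le]
      have hVt : Vw t = (4:ℝ)^(N-K0) := by rw [hV]; simp [hkt]
      have h0K1 : (0:ℝ) ≤ ((K0:ℝ)+1)*δ := by positivity
      have htK1 : t ≤ ((K0:ℝ)+1)*δ := hfl2.le
      have hsubC : Set.Ico t (((K0:ℝ)+1)*δ) ⊆ Set.Ici (0:ℝ) := fun s hs => le_trans ht hs.1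
      have hsubI : Set.Ici (((K0:ℝ)+1)*δ) ⊆ Set.Ici (0:ℝ) := fun s hs => le_trans h0K1 hs
      have hdec := MeasureTheory.setIntegral_union (μ := volume) (f := fun s => f s * Vw s)
          (s := Set.Ico t (((K0:ℝ)+1)*δ)) (t := Set.Ici (((K0:ℝ)+1)*δ))
          (Set.disjoint_left.2 fun s hs1 hs2 => absurd hs1.2 (not_lt.2 hs2))
          measurableSet_Ici (hVint.mono_set hsubC) (hVint.mono_set hsubI)
      rw [Set.Ico_union_Ici_eq_Ici htK1] at hdec
      rw [hdec]
      have hpiece : ∫ s in Set.Ico t (((K0:ℝ)+1)*δ), f s * Vw s ≤ (4:ℝ)^(N-K0) * (1/2) := by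
        have hb : ∫ s in Set.Ico t (((K0:ℝ)+1)*δ), f s * Vw s
            ≤ ∫ s in Set.Ico t (((K0:ℝ)+1)*δ), f s * (4:ℝ)^(N-K0) := by
          refine MeasureTheory.setIntegral_mono_on (hVint.mono_set hsubC)
            ((hfi.mono_set hsubC).mul_const _) measurableSet_Ico ?_
          intro s hs
          refine mul_le_mul_of_nonneg_left ?_ (hf0 s)
          have hks : k t ≤ k s := hk_mono hs.1
          exact pow_le_pow_right₀ (by norm_num) (by omega)
        have hc2 : ∫ s in Set.Ico t (((K0:ℝ)+1)*δ), f s ≤ 1/2 := by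
          rw [MeasureTheory.integral_Ico_eq_integral_Ioo,
            ← MeasureTheory.integral_Ioc_eq_integral_Ioo]
          exact H1 _ _ ht htK1 (by nlinarith)
        calc ∫ s in Set.Ico t (((K0:ℝ)+1)*δ), f s * Vw s
            ≤ ∫ s in Set.Ico t (((K0:ℝ)+1)*δ), f s * (4:ℝ)^(N-K0) := hb
          _ = (∫ s in Set.Ico t (((K0:ℝ)+1)*δ), f s) * (4:ℝ)^(N-K0) :=
              MeasureTheory.integral_mul_const _ _
          _ ≤ (4:ℝ)^(N-K0) * (1/2) := by
              nlinarith [pow_pos (by norm_num : (0:ℝ) < 4) (N-K0)]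
      have hih : ∫ s in Set.Ici (((K0:ℝ)+1)*δ), f s * Vw s
          ≤ (∑ l ∈ Finset.range (N-K0), (4:ℝ)^l) * (1/2) := by
        have hNK : N - K0 - 1 ≤ N := by omega
        have := hR (N - K0 - 1) hNK
        have hcast2 : (((N-(N-K0-1) : ℕ)):ℝ)*δ = ((K0:ℝ)+1)*δ := by
          have : (N-(N-K0-1) : ℕ) = K0 + 1 := by omega
          rw [this]; push_cast; ring
        rw [hcast2] at this
        have : ∫ s in Set.Ici (((K0:ℝ)+1)*δ), f s * Vw s
            ≤ (∑ l ∈ Finset.range (N-K0-1+1), (4:ℝ)^l) * (1/2) := this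
        have heq : N - K0 - 1 + 1 = N - K0 := by omega
        rwa [heq] at this
      rw [hVt]
      rw [hgeom] at hih
      have hg4 : (1:ℝ) ≤ (4:ℝ)^(N-K0) := one_le_pow₀ (by norm_num)
      linarith
    · have hkt : k t = N := by simp only [hk]; rw [min_eq_right hc]
      have hVt : Vw t = 1 := by rw [hV]; simp [hkt]
      have htN : ((N:ℝ))*δ ≤ t := by
        refine le_trans ?_ hfl1
        have : (N:ℝ) ≤ (K0:ℝ) := by exact_mod_cast hc
        nlinarith
      have h0N : (0:ℝ) ≤ (N:ℝ)*δ := by positivity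
      have hmono : ∫ s in Set.Ici t, f s * Vw s ≤ ∫ s in Set.Ici ((N:ℝ)*δ), f s * Vw s := by
        refine MeasureTheory.setIntegral_mono_set
          (hVint.mono_set (fun s hs => le_trans h0N hs))
          (Filter.Eventually.of_forall fun s => hfV0 s)
          (Set.Ici_subset_Ici.2 htN).eventuallyLE
      have := hR 0 (by omega)
      simp only [Nat.sub_zero, Finset.range_one, Finset.sum_singleton, pow_zero, one_mul] at this
      rw [hVt]
      linarith
  exact ⟨W, Vw, hWmono, hVanti, hW1, hWB, hV1, hVB, hWint, hVint, hM1, hM2⟩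

lemma choose_params (f : ℝ → ℝ) (hf0 : ∀ s, 0 ≤ f s) (hfi : IntegrableOn f (Set.Ici (0:ℝ))) :
    ∃ δ : ℝ, 0 < δ ∧ ∃ N : ℕ,
      (∀ c d : ℝ, 0 ≤ c → c ≤ d → d ≤ c + δ → ∫ s in Set.Ioc c d, f s ≤ 1/2) ∧
      (∫ s in Set.Ici ((N:ℝ)*δ), f s ≤ 1/2) := by
  have htt : Tendsto (fun t => ∫ s in Set.Ici t, f s) atTop (nhds 0) := tail_tendsto hfi
  have hev : ∀ᶠ t in atTop, ∫ s in Set.Ici t, f s < 1/4 :=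
    htt.eventually_lt_const (by norm_num)
  obtain ⟨R₀, hR₀⟩ := eventually_atTop.1 hev
  set R : ℝ := max R₀ 0 with hRdef
  have hR0 : 0 ≤ R := le_max_right _ _
  have h_tail : ∀ t : ℝ, R ≤ t → ∫ s in Set.Ici t, f s ≤ 1/4 :=
    fun t ht => (hR₀ t (le_trans (le_max_left _ _) ht)).le
  set fe : ℝ → ℝ := Set.indicator (Set.Ici 0) f with hfe_def
  have hfe : Integrable fe := (integrable_indicator_iff measurableSet_Ici).2 hfi
  set G : ℝ → ℝ := fun u => ∫ s in (0:ℝ)..u, fe s with hGdef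
  have hGcont : Continuous G := hfe.continuous_primitive 0
  have hGdiff : ∀ c d : ℝ, 0 ≤ c → c ≤ d → ∫ s in Set.Ioc c d, f s = G d - G c := by
    intro c d hc hcd
    have h1 : G d - G c = ∫ s in c..d, fe s :=
      intervalIntegral.integral_interval_sub_left
        (hfe.intervalIntegrable (a := 0) (b := d)) (hfe.intervalIntegrable (a := 0) (b := c))
    rw [h1, intervalIntegral.integral_of_le hcd]
    refine MeasureTheory.setIntegral_congr_fun measurableSet_Ioc ?_
    intro s hs
    exact (Set.indicator_of_mem (Set.mem_Ici.2 (le_trans hc hs.1.le)) f).symm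
  have hGuc : UniformContinuousOn G (Set.Icc 0 (R+2)) :=
    (isCompact_Icc).uniformContinuousOn_of_continuous hGcont.continuousOn
  rw [Metric.uniformContinuousOn_iff] at hGuc
  obtain ⟨δ₀, hδ₀, hδ₀p⟩ := hGuc (1/4) (by norm_num)
  set δ : ℝ := min (δ₀/2) 1 with hδdef
  have hδ : 0 < δ := lt_min (by linarith) one_pos
  have hδ1 : δ ≤ 1 := min_le_right _ _
  refine ⟨δ, hδ, ⌈R/δ⌉₊, ?_, ?_⟩
  · intro c d hc hcd hdc
    rcases le_or_gt d (R+2) with hcase | hcase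
    · have hcmem : c ∈ Set.Icc (0:ℝ) (R+2) := ⟨hc, le_trans hcd hcase⟩
      have hdmem : d ∈ Set.Icc (0:ℝ) (R+2) := ⟨le_trans hc hcd, hcase⟩
      have hdist : dist d c < δ₀ := by
        rw [Real.dist_eq, abs_of_nonneg (by linarith)]
        have : δ ≤ δ₀/2 := min_le_left _ _
        linarith
      have := hδ₀p d hdmem c hcmem hdist
      rw [Real.dist_eq] at this
      have habs : G d - G c < 1/4 := lt_of_le_of_lt (le_abs_self _) this
      rw [hGdiff c d hc hcd]
      linarith
    · have hcR : R ≤ c := by linarith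
      have hsub : Set.Ioc c d ⊆ Set.Ici c := fun s hs => hs.1.le
      have h2 : ∫ s in Set.Ioc c d, f s ≤ ∫ s in Set.Ici c, f s :=
        MeasureTheory.setIntegral_mono_set
          (hfi.mono_set (fun s hs => le_trans hc hs))
          (Filter.Eventually.of_forall hf0) hsub.eventuallyLE
      linarith [h_tail c hcR]
  · have hNδ : R ≤ (⌈R/δ⌉₊ : ℝ) * δ := by
      have := Nat.le_ceil (R/δ)
      calc R = (R/δ)*δ := by field_simp
        _ ≤ (⌈R/δ⌉₊ : ℝ) * δ := by nlinarith
    linarith [h_tail _ hNδ]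

lemma picard_master {V : Type*} [NormedAddCommGroup V] [NormedSpace ℝ V] [CompleteSpace V]
    (P : (ℝ → V) → (ℝ → V)) (u : ℝ → ℝ) (B : ℝ) (ζ : V)
    (hu1 : ∀ t ∈ Set.Ici (0:ℝ), 1 ≤ u t)
    (huB : ∀ t ∈ Set.Ici (0:ℝ), u t ≤ B)
    (hP1 : ∀ x : ℝ → V, ContinuousOn x (Set.Ici 0) →
      (∃ C, ∀ t ∈ Set.Ici (0:ℝ), ‖x t‖ ≤ C) →
      ContinuousOn (P x) (Set.Ici 0) ∧ (∃ C, ∀ t ∈ Set.Ici (0:ℝ), ‖P x t‖ ≤ C))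
    (hP2 : ∀ (x y : ℝ → V) (D : ℝ), ContinuousOn x (Set.Ici 0) →
      (∃ C, ∀ t ∈ Set.Ici (0:ℝ), ‖x t‖ ≤ C) →
      ContinuousOn y (Set.Ici 0) → (∃ C, ∀ t ∈ Set.Ici (0:ℝ), ‖y t‖ ≤ C) →
      0 ≤ D → (∀ s ∈ Set.Ici (0:ℝ), ‖x s - y s‖ ≤ D * u s) →
      ∀ t ∈ Set.Ici (0:ℝ), ‖P x t - P y t‖ ≤ 2/3 * D * u t) :
    ∃ x : ℝ → V, ContinuousOn x (Set.Ici 0) ∧ (∃ C, ∀ t ∈ Set.Ici (0:ℝ), ‖x t‖ ≤ C) ∧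
      (∀ t ∈ Set.Ici (0:ℝ), P x t = x t) := by
  have hB1 : (1:ℝ) ≤ B := le_trans (hu1 0 Set.self_mem_Ici) (huB 0 Set.self_mem_Ici)
  set xk : ℕ → ℝ → V := fun kk => P^[kk] (fun _ => ζ) with hxk
  have hiter : ∀ kk, xk (kk+1) = P (xk kk) := by
    intro kk; rw [hxk]; simp [Function.iterate_succ_apply']
  have hGood : ∀ kk, ContinuousOn (xk kk) (Set.Ici 0) ∧
      (∃ C, ∀ t ∈ Set.Ici (0:ℝ), ‖xk kk t‖ ≤ C) := by
    intro kk
    induction kk with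
    | zero => exact ⟨continuousOn_const, ‖ζ‖, fun t _ => le_refl _⟩
    | succ kk ih => rw [hiter kk]; exact hP1 _ ih.1 ih.2
  obtain ⟨C1, hC1⟩ := (hGood 1).2
  set D0 : ℝ := C1 + ‖ζ‖ with hD0
  have hD0nn : 0 ≤ D0 := by
    have := hC1 0 Set.self_mem_Ici
    have h2 := norm_nonneg (xk 1 0)
    have h3 := norm_nonneg ζ
    rw [hD0]; linarith
  have hdiff : ∀ kk, ∀ t ∈ Set.Ici (0:ℝ), ‖xk (kk+1) t - xk kk t‖ ≤ (2/3)^kk * D0 * u t := by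
    intro kk
    induction kk with
    | zero =>
      intro t ht
      have h1 : ‖xk 1 t - xk 0 t‖ ≤ D0 := by
        calc ‖xk 1 t - xk 0 t‖ ≤ ‖xk 1 t‖ + ‖xk 0 t‖ := norm_sub_le _ _
          _ ≤ D0 := by
              have h4 : ‖xk 0 t‖ = ‖ζ‖ := rfl
              rw [h4, hD0]; exact add_le_add_left (hC1 t ht) _
      calc ‖xk 1 t - xk 0 t‖ ≤ D0 * 1 := by linarith
        _ ≤ D0 * u t := by nlinarith [hu1 t ht]
        _ = (2/3)^0 * D0 * u t := by ring
    | succ kk ih =>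
      intro t ht
      have h1 : ‖xk (kk+1+1) t - xk (kk+1) t‖ = ‖P (xk (kk+1)) t - P (xk kk) t‖ := by
        rw [hiter (kk+1), hiter kk]
      rw [h1]
      have h2 := hP2 (xk (kk+1)) (xk kk) ((2/3)^kk * D0)
        (hGood (kk+1)).1 (hGood (kk+1)).2 (hGood kk).1 (hGood kk).2
        (by positivity) ih t ht
      calc ‖P (xk (kk+1)) t - P (xk kk) t‖ ≤ 2/3 * ((2/3)^kk * D0) * u t := h2
        _ = (2/3)^(kk+1) * D0 * u t := by ring
  have hsum0 : ∀ kk m, ∀ t ∈ Set.Ici (0:ℝ),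
      ‖xk (kk+m) t - xk kk t‖ ≤ (∑ j ∈ Finset.range m, (2/3:ℝ)^(kk+j)) * D0 * u t := by
    intro kk m
    induction m with
    | zero => intro t ht; simp
    | succ m ih =>
      intro t ht
      have h1 : ‖xk (kk+(m+1)) t - xk kk t‖
          ≤ ‖xk (kk+m+1) t - xk (kk+m) t‖ + ‖xk (kk+m) t - xk kk t‖ := by
        have : kk+(m+1) = kk+m+1 := by ring
        rw [this]
        exact norm_sub_le_norm_sub_add_norm_sub _ _ _
      have h2 := hdiff (kk+m) t ht
      have h3 := ih t ht
      rw [Finset.sum_range_succ]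
      have hpa : ((2:ℝ)/3)^(kk+m) * D0 * u t ≤ ((2:ℝ)/3)^(kk+m) * D0 * u t := le_refl _
      calc ‖xk (kk+(m+1)) t - xk kk t‖
          ≤ ((2:ℝ)/3)^(kk+m) * D0 * u t
            + (∑ j ∈ Finset.range m, (2/3:ℝ)^(kk+j)) * D0 * u t := by linarith
        _ = ((∑ j ∈ Finset.range m, (2/3:ℝ)^(kk+j)) + (2/3:ℝ)^(kk+m)) * D0 * u t := by ring
  have hgeom3 : ∀ kk m : ℕ, (∑ j ∈ Finset.range m, (2/3:ℝ)^(kk+j)) ≤ 3*(2/3)^kk := by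
    intro kk m
    have h1 : (∑ j ∈ Finset.range m, (2/3:ℝ)^(kk+j))
        = (2/3:ℝ)^kk * (∑ j ∈ Finset.range m, (2/3:ℝ)^j) := by
      rw [Finset.mul_sum]
      exact Finset.sum_congr rfl fun j _ => by rw [pow_add]
    have h2 := geom_sum_eq (by norm_num : (2/3:ℝ) ≠ 1) m
    have h3 : (0:ℝ) ≤ (2/3:ℝ)^m := by positivity
    have h4 : ((2:ℝ)/3)^m ≤ 1 := pow_le_one₀ (by norm_num) (by norm_num)
    have h5 : (∑ j ∈ Finset.range m, (2/3:ℝ)^j) ≤ 3 := by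
      rw [h2]
      have he : ((2/3:ℝ)^m - 1)/((2/3:ℝ)-1) = 3*(1 - (2/3:ℝ)^m) := by ring
      rw [he]; linarith
    have h6 : (0:ℝ) ≤ (2/3:ℝ)^kk := by positivity
    rw [h1]; nlinarith
  have hsum : ∀ kk m, ∀ t ∈ Set.Ici (0:ℝ),
      ‖xk (kk+m) t - xk kk t‖ ≤ 3*(2/3)^kk * D0 * u t := by
    intro kk m t ht
    have h1 := hsum0 kk m t ht
    have h2 := hgeom3 kk m
    have hu0 : 0 ≤ u t := le_trans zero_le_one (hu1 t ht)
    have h4 := mul_le_mul_of_nonneg_right h2 (mul_nonneg hD0nn hu0)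
    nlinarith [h4]
  have hcauchy : ∀ t : ℝ, 0 ≤ t → ∃ l : V, Tendsto (fun kk => xk kk t) atTop (nhds l) := by
    intro t ht
    have : CauchySeq (fun kk => xk kk t) := by
      refine cauchySeq_of_le_geometric (2/3) (D0 * u t) (by norm_num) ?_
      intro nn
      rw [dist_eq_norm, norm_sub_rev]
      calc ‖xk (nn+1) t - xk nn t‖ ≤ (2/3)^nn * D0 * u t := hdiff nn t ht
        _ = D0 * u t * (2/3)^nn := by ring
    exact cauchySeq_tendsto_of_complete this
  set xl : ℝ → V := fun t => if ht : (0:ℝ) ≤ t then (hcauchy t ht).choose else ζ with hxl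
  have htend : ∀ t : ℝ, 0 ≤ t → Tendsto (fun kk => xk kk t) atTop (nhds (xl t)) := by
    intro t ht
    have : xl t = (hcauchy t ht).choose := by rw [hxl]; simp [ht]
    rw [this]
    exact (hcauchy t ht).choose_spec
  have hunif : ∀ kk, ∀ t ∈ Set.Ici (0:ℝ), ‖xl t - xk kk t‖ ≤ 3*(2/3)^kk * D0 * B := by
    intro kk t ht
    have h1 : Tendsto (fun ll => ‖xk ll t - xk kk t‖) atTop (nhds ‖xl t - xk kk t‖) :=
      ((htend t ht).sub tendsto_const_nhds).norm
    refine le_of_tendsto h1 ?_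
    filter_upwards [eventually_ge_atTop kk] with ll hll
    have h2 : ll = kk + (ll - kk) := by omega
    rw [h2]
    have h3 := hsum kk (ll - kk) t ht
    have huB' := huB t ht
    have hu0 : 0 ≤ u t := le_trans zero_le_one (hu1 t ht)
    have h4 := mul_le_mul_of_nonneg_left huB' (by positivity : (0:ℝ) ≤ 3*(2/3:ℝ)^kk*D0)
    nlinarith [h4]
  have hto0 : Tendsto (fun kk : ℕ => 3*(2/3:ℝ)^kk * D0 * B) atTop (nhds 0) := by
    have h1 : Tendsto (fun kk : ℕ => (2/3:ℝ)^kk) atTop (nhds 0) :=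
      tendsto_pow_atTop_nhds_zero_of_lt_one (by norm_num) (by norm_num)
    have := (h1.const_mul 3).mul_const D0
    have := this.mul_const B
    simpa using this
  have hunifOn : TendstoUniformlyOn (fun kk => xk kk) xl atTop (Set.Ici 0) := by
    rw [Metric.tendstoUniformlyOn_iff]
    intro ε hε
    have hev : ∀ᶠ kk : ℕ in atTop, 3*(2/3:ℝ)^kk * D0 * B < ε :=
      hto0.eventually_lt_const hε
    filter_upwards [hev] with kk hkk t ht
    rw [dist_eq_norm]
    exact lt_of_le_of_lt (hunif kk t ht) hkk
  have hxlcont : ContinuousOn xl (Set.Ici 0) :=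
    hunifOn.continuousOn (Filter.Eventually.of_forall fun kk => (hGood kk).1).frequently
  have hxlbdd : ∀ t ∈ Set.Ici (0:ℝ), ‖xl t‖ ≤ ‖ζ‖ + 3 * D0 * B := by
    intro t ht
    have h1 := hunif 0 t ht
    have h2 : xk 0 t = ζ := rfl
    rw [h2] at h1
    have h3 : ‖xl t‖ ≤ ‖xl t - ζ‖ + ‖ζ‖ := by
      have := norm_add_le (xl t - ζ) ζ
      simpa using this
    have h4 : (3:ℝ)*(2/3)^(0:ℕ) * D0 * B = 3*D0*B := by norm_num
    rw [h4] at h1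
    linarith
  refine ⟨xl, hxlcont, ⟨‖ζ‖ + 3*D0*B, hxlbdd⟩, ?_⟩
  intro t ht
  have key : ∀ kk : ℕ, ‖P xl t - xl t‖ ≤ (2/3)^kk * (2*D0*B*B + 2*D0*B) := by
    intro kk
    have hDk : (0:ℝ) ≤ 3*(2/3)^kk * D0 * B := by positivity
    have hbnd : ∀ s ∈ Set.Ici (0:ℝ), ‖xl s - xk kk s‖ ≤ (3*(2/3)^kk * D0 * B) * u s := by
      intro s hs
      have h5 := hunif kk s hs
      nlinarith [hu1 s hs]
    have h1 := hP2 xl (xk kk) (3*(2/3)^kk * D0 * B) hxlcont ⟨_, hxlbdd⟩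
      (hGood kk).1 (hGood kk).2 hDk hbnd t ht
    have h2 : ‖P xl t - xl t‖
        ≤ ‖P xl t - P (xk kk) t‖ + ‖P (xk kk) t - xl t‖ :=
      norm_sub_le_norm_sub_add_norm_sub _ _ _
    have h6 : ‖P (xk kk) t - xl t‖ ≤ 3*(2/3)^(kk+1) * D0 * B := by
      rw [← hiter kk, norm_sub_rev]
      exact hunif (kk+1) t ht
    have h7 : (2/3:ℝ)^(kk+1) = (2/3)^kk * (2/3) := pow_succ _ _
    have hu' := huB t ht
    have hu0 : 0 ≤ u t := le_trans zero_le_one (hu1 t ht)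
    have hp0 : (0:ℝ) ≤ (2/3:ℝ)^kk := by positivity
    have hBnn : (0:ℝ) ≤ B := le_trans zero_le_one hB1
    have h8 : (2*(2/3:ℝ)^kk*D0*B)*u t ≤ (2*(2/3:ℝ)^kk*D0*B)*B :=
      mul_le_mul_of_nonneg_left hu'
        (mul_nonneg (mul_nonneg (by linarith) hD0nn) hBnn)
    rw [h7] at h6
    linarith
  have hfin : Tendsto (fun kk : ℕ => (2/3:ℝ)^kk * (2*D0*B*B + 2*D0*B)) atTop (nhds 0) := by
    simpa using (tendsto_pow_atTop_nhds_zero_of_lt_one (by norm_num : (0:ℝ) ≤ 2/3)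
      (by norm_num)).mul_const (2*D0*B*B + 2*D0*B)
  have h0 : ‖P xl t - xl t‖ ≤ 0 := ge_of_tendsto hfin (Filter.Eventually.of_forall key)
  exact sub_eq_zero.1 (norm_le_zero_iff.1 h0)

section helpers
variable {V : Type*} [NormedAddCommGroup V] [NormedSpace ℝ V]

lemma integrableOn_Ax {A : ℝ → (V →L[ℝ] V)}
    (hA : AEStronglyMeasurable A (volume.restrict (Set.Ici (0:ℝ))))
    (hAint : IntegrableOn (fun t => ‖A t‖) (Set.Ici (0:ℝ)))
    {S : Set ℝ} (hSm : MeasurableSet S) (hS : S ⊆ Set.Ici 0)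
    {x : ℝ → V} (hx : ContinuousOn x S) {C : ℝ} (hxC : ∀ t ∈ S, ‖x t‖ ≤ C) :
    IntegrableOn (fun s => A s (x s)) S := by
  have hAS : AEStronglyMeasurable A (volume.restrict S) :=
    hA.mono_measure (Measure.restrict_mono hS le_rfl)
  have hxS : AEStronglyMeasurable x (volume.restrict S) := hx.aestronglyMeasurable hSm
  have hasm : AEStronglyMeasurable (fun s => A s (x s)) (volume.restrict S) :=
    aesm_apply hAS hxS
  refine Integrable.mono' ((hAint.mono_set hS).mul_const C) hasm ?_
  refine (ae_restrict_iff' hSm).2 (ae_of_all _ fun s hs => ?_)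
  calc ‖A s (x s)‖ ≤ ‖A s‖ * ‖x s‖ := (A s).le_opNorm _
    _ ≤ ‖A s‖ * C := mul_le_mul_of_nonneg_left (hxC s hs) (norm_nonneg _)

/-- weighted contraction estimate, finite anchor -/
lemma contr_est_fin (f : ℝ → ℝ) (hf0 : ∀ s, 0 ≤ f s)
    (W Vw : ℝ → ℝ) (hW1 : ∀ t, 1 ≤ W t) (hV1 : ∀ t, 1 ≤ Vw t)
    (hfWint : IntegrableOn (fun s => f s * W s) (Set.Ici 0))
    (hfVint : IntegrableOn (fun s => f s * Vw s) (Set.Ici 0))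
    (hM1 : ∀ t, 0 ≤ t → ∫ s in Set.Ioc 0 t, f s * W s ≤ 2/3 * W t)
    (hM2 : ∀ t, 0 ≤ t → ∫ s in Set.Ici t, f s * Vw s ≤ 2/3 * Vw t)
    (t₀ : ℝ) (ht₀ : 0 ≤ t₀) (D : ℝ) (hD : 0 ≤ D)
    (u : ℝ → ℝ) (hu : u = fun s => if t₀ ≤ s then W s / W t₀ else Vw s / Vw t₀)
    (g : ℝ → V) (t : ℝ) (ht : 0 ≤ t)
    (hgi : IntegrableOn g (Set.uIcc t₀ t))
    (hgb : ∀ s ∈ Set.uIcc t₀ t, ‖g s‖ ≤ f s * (D * u s)) :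
    ‖∫ s in t₀..t, g s‖ ≤ 2/3 * D * u t := by
  have hWpos : ∀ s, 0 < W s := fun s => lt_of_lt_of_le one_pos (hW1 s)
  have hVpos : ∀ s, 0 < Vw s := fun s => lt_of_lt_of_le one_pos (hV1 s)
  rcases le_total t₀ t with hc | hc
  · have hut : u t = W t / W t₀ := by rw [hu]; simp [hc]
    have hsub : Set.Ioc t₀ t ⊆ Set.uIcc t₀ t := by
      rw [Set.uIcc_of_le hc]; exact Set.Ioc_subset_Icc_self
    have hsub0 : Set.Ioc t₀ t ⊆ Set.Ici (0:ℝ) := fun s hs => le_trans ht₀ hs.1.le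
    have h1 : ‖∫ s in t₀..t, g s‖ ≤ ∫ s in Set.Ioc t₀ t, ‖g s‖ := by
      rw [intervalIntegral.integral_of_le hc]
      exact norm_integral_le_integral_norm g
    have heq : ∀ s ∈ Set.Ioc t₀ t, ‖g s‖ ≤ (D * (W t₀)⁻¹) * (f s * W s) := by
      intro s hs
      have hgb' := hgb s (hsub hs)
      have : u s = W s / W t₀ := by rw [hu]; simp [hs.1.le]
      rw [this] at hgb'
      calc ‖g s‖ ≤ f s * (D * (W s / W t₀)) := hgb'
        _ = (D * (W t₀)⁻¹) * (f s * W s) := by field_simp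
    have h2 : ∫ s in Set.Ioc t₀ t, ‖g s‖
        ≤ ∫ s in Set.Ioc t₀ t, (D * (W t₀)⁻¹) * (f s * W s) := by
      refine MeasureTheory.setIntegral_mono_on ((hgi.mono_set hsub).norm)
        (((hfWint.mono_set hsub0)).const_mul _) measurableSet_Ioc heq
    have h3 : ∫ s in Set.Ioc t₀ t, (D * (W t₀)⁻¹) * (f s * W s)
        = (D * (W t₀)⁻¹) * ∫ s in Set.Ioc t₀ t, f s * W s :=
      MeasureTheory.integral_const_mul _ _
    have h4 : ∫ s in Set.Ioc t₀ t, f s * W s ≤ ∫ s in Set.Ioc 0 t, f s * W s := by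
      refine MeasureTheory.setIntegral_mono_set
        (hfWint.mono_set (fun s hs => hs.1.le))
        (Filter.Eventually.of_forall fun s =>
          mul_nonneg (hf0 s) (le_trans zero_le_one (hW1 s)))
        (Set.Ioc_subset_Ioc_left ht₀).eventuallyLE
    have h5 := hM1 t ht
    have hfac : (0:ℝ) ≤ D * (W t₀)⁻¹ := mul_nonneg hD (inv_nonneg.2 (hWpos t₀).le)
    calc ‖∫ s in t₀..t, g s‖ ≤ ∫ s in Set.Ioc t₀ t, ‖g s‖ := h1
      _ ≤ (D * (W t₀)⁻¹) * ∫ s in Set.Ioc t₀ t, f s * W s := by rw [← h3]; exact h2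
      _ ≤ (D * (W t₀)⁻¹) * (2/3 * W t) := by
          refine mul_le_mul_of_nonneg_left (le_trans h4 h5) hfac
      _ = 2/3 * D * u t := by rw [hut]; field_simp
  · have hut : u t = Vw t / Vw t₀ := by
      rcases eq_or_lt_of_le hc with he | hlt
      · rw [hu]; subst he
        simp only [le_refl, if_pos]
        rw [div_self (ne_of_gt (hWpos t)), div_self (ne_of_gt (hVpos t))]
      · rw [hu]; simp [not_le.2 hlt]
    have hsub : Set.Ioc t t₀ ⊆ Set.uIcc t₀ t := by
      rw [Set.uIcc_of_ge hc]; exact Set.Ioc_subset_Icc_self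
    have hsub0 : Set.Ioc t t₀ ⊆ Set.Ici (0:ℝ) := fun s hs => le_trans ht hs.1.le
    have h1 : ‖∫ s in t₀..t, g s‖ ≤ ∫ s in Set.Ioc t t₀, ‖g s‖ := by
      rw [intervalIntegral.integral_symm, norm_neg, intervalIntegral.integral_of_le hc]
      exact norm_integral_le_integral_norm g
    have heq : ∀ s ∈ Set.Ioc t t₀, ‖g s‖ ≤ (D * (Vw t₀)⁻¹) * (f s * Vw s) := by
      intro s hs
      have hgb' := hgb s (hsub hs)
      have hus : u s ≤ Vw s / Vw t₀ := by
        rcases eq_or_lt_of_le hs.2 with he | hlt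
        · rw [hu]; subst he
          simp only [le_refl, if_pos]
          rw [div_self (ne_of_gt (hWpos s)), div_self (ne_of_gt (hVpos s))]
        · rw [hu]; simp [not_le.2 hlt]
      have hD' : 0 ≤ f s * D := mul_nonneg (hf0 s) hD
      calc ‖g s‖ ≤ f s * (D * u s) := hgb'
        _ ≤ f s * (D * (Vw s / Vw t₀)) := by nlinarith [mul_le_mul_of_nonneg_left hus hD']
        _ = (D * (Vw t₀)⁻¹) * (f s * Vw s) := by field_simp
    have h2 : ∫ s in Set.Ioc t t₀, ‖g s‖
        ≤ ∫ s in Set.Ioc t t₀, (D * (Vw t₀)⁻¹) * (f s * Vw s) :=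
      MeasureTheory.setIntegral_mono_on ((hgi.mono_set hsub).norm)
        (((hfVint.mono_set hsub0)).const_mul _) measurableSet_Ioc heq
    have h3 : ∫ s in Set.Ioc t t₀, (D * (Vw t₀)⁻¹) * (f s * Vw s)
        = (D * (Vw t₀)⁻¹) * ∫ s in Set.Ioc t t₀, f s * Vw s :=
      MeasureTheory.integral_const_mul _ _
    have h4 : ∫ s in Set.Ioc t t₀, f s * Vw s ≤ ∫ s in Set.Ici t, f s * Vw s := by
      have hsubt : Set.Ioc t t₀ ⊆ Set.Ici t := fun s hs => hs.1.le
      refine MeasureTheory.setIntegral_mono_set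
        (hfVint.mono_set (fun s hs => le_trans ht hs))
        (Filter.Eventually.of_forall fun s =>
          mul_nonneg (hf0 s) (le_trans zero_le_one (hV1 s)))
        hsubt.eventuallyLE
    have h5 := hM2 t ht
    have hfac : (0:ℝ) ≤ D * (Vw t₀)⁻¹ := mul_nonneg hD (inv_nonneg.2 (hVpos t₀).le)
    calc ‖∫ s in t₀..t, g s‖ ≤ ∫ s in Set.Ioc t t₀, ‖g s‖ := h1
      _ ≤ (D * (Vw t₀)⁻¹) * ∫ s in Set.Ioc t t₀, f s * Vw s := by rw [← h3]; exact h2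
      _ ≤ (D * (Vw t₀)⁻¹) * (2/3 * Vw t) := by
          refine mul_le_mul_of_nonneg_left (le_trans h4 h5) hfac
      _ = 2/3 * D * u t := by rw [hut]; field_simp

/-- weighted contraction estimate, anchor at infinity -/
lemma contr_est_top (f : ℝ → ℝ) (hf0 : ∀ s, 0 ≤ f s)
    (Vw : ℝ → ℝ) (hV1 : ∀ t, 1 ≤ Vw t)
    (hfVint : IntegrableOn (fun s => f s * Vw s) (Set.Ici 0))
    (hM2 : ∀ t, 0 ≤ t → ∫ s in Set.Ici t, f s * Vw s ≤ 2/3 * Vw t)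
    (D : ℝ) (hD : 0 ≤ D)
    (g : ℝ → V) (t : ℝ) (ht : 0 ≤ t)
    (hgi : IntegrableOn g (Set.Ici t))
    (hgb : ∀ s ∈ Set.Ici t, ‖g s‖ ≤ f s * (D * Vw s)) :
    ‖∫ s in Set.Ici t, g s‖ ≤ 2/3 * D * Vw t := by
  have h1 : ‖∫ s in Set.Ici t, g s‖ ≤ ∫ s in Set.Ici t, ‖g s‖ :=
    norm_integral_le_integral_norm g
  have hsub0 : Set.Ici t ⊆ Set.Ici (0:ℝ) := fun s hs => le_trans ht hs
  have h2 : ∫ s in Set.Ici t, ‖g s‖ ≤ ∫ s in Set.Ici t, D * (f s * Vw s) := by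
    refine MeasureTheory.setIntegral_mono_on (hgi.norm)
      ((hfVint.mono_set hsub0).const_mul _) measurableSet_Ici ?_
    intro s hs
    calc ‖g s‖ ≤ f s * (D * Vw s) := hgb s hs
      _ = D * (f s * Vw s) := by ring
  have h3 : ∫ s in Set.Ici t, D * (f s * Vw s) = D * ∫ s in Set.Ici t, f s * Vw s :=
    MeasureTheory.integral_const_mul _ _
  have h4 := hM2 t ht
  calc ‖∫ s in Set.Ici t, g s‖ ≤ D * ∫ s in Set.Ici t, f s * Vw s := by
        rw [← h3]; exact le_trans h1 h2
    _ ≤ D * (2/3 * Vw t) := mul_le_mul_of_nonneg_left h4 hD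
    _ = 2/3 * D * Vw t := by ring

end helpers

section maincases
variable {V : Type*} [NormedAddCommGroup V] [NormedSpace ℝ V] [CompleteSpace V]

lemma norm_intvl {g : ℝ → V} (hg : IntegrableOn g (Set.Ici (0:ℝ))) {c d : ℝ}
    (hc : 0 ≤ c) (hd : 0 ≤ d) :
    ‖∫ s in c..d, g s‖ ≤ ∫ s in Set.Ici (0:ℝ), ‖g s‖ := by
  have hmono : ∀ p q : ℝ, 0 ≤ p → p ≤ q → ‖∫ s in p..q, g s‖ ≤ ∫ s in Set.Ici (0:ℝ), ‖g s‖ := by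
    intro p q hp hpq
    rw [intervalIntegral.integral_of_le hpq]
    refine le_trans (norm_integral_le_integral_norm g) ?_
    have hsub : Set.Ioc p q ⊆ Set.Ici (0:ℝ) := fun s hs => le_trans hp hs.1.le
    exact MeasureTheory.setIntegral_mono_set hg.norm
      (Filter.Eventually.of_forall fun s => norm_nonneg _) hsub.eventuallyLE
  rcases le_total c d with h | h
  · exact hmono c d hc h
  · rw [intervalIntegral.integral_symm, norm_neg]; exact hmono d c hd h

lemma case_fin (A : ℝ → (V →L[ℝ] V)) (a : ℝ → V)
    (hA : AEStronglyMeasurable A (volume.restrict (Set.Ici (0:ℝ))))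
    (ha : AEStronglyMeasurable a (volume.restrict (Set.Ici (0:ℝ))))
    (hAint : IntegrableOn (fun t => ‖A t‖) (Set.Ici (0:ℝ)))
    (haint : IntegrableOn (fun t => ‖a t‖) (Set.Ici (0:ℝ)))
    (ζ : V) (t₀ : ℝ) (ht₀ : 0 ≤ t₀) :
    ∃ x : ℝ → V, (ContinuousOn x (Set.Ici 0) ∧
      (∀ t ∈ Set.Ici (0:ℝ), x t = x 0 + ∫ s in (0:ℝ)..t, (A s (x s) + a s)) ∧
      x t₀ = ζ ∧
      (∃ C : ℝ, ∀ t ∈ Set.Ici (0:ℝ), ‖x t‖ ≤ C) ∧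
      (∃ L, Tendsto x atTop (nhds L))) ∧
      ∀ y : ℝ → V, ContinuousOn y (Set.Ici 0) →
        (∀ t ∈ Set.Ici (0:ℝ), y t = y 0 + ∫ s in (0:ℝ)..t, (A s (y s) + a s)) →
        y t₀ = ζ → Set.EqOn y x (Set.Ici 0) := by
  have haI : IntegrableOn a (Set.Ici (0:ℝ)) :=
    Integrable.mono' haint ha (ae_of_all _ fun s => le_refl _)
  have hf0 : ∀ s : ℝ, 0 ≤ ‖A s‖ := fun s => norm_nonneg _
  obtain ⟨δ, hδ, N, H1, H2⟩ := choose_params _ hf0 hAint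
  obtain ⟨W, Vw, hWmono, hVanti, hW1, hWB, hV1, hVB, hfWint, hfVint, hM1, hM2⟩ :=
    weight_package _ hf0 hAint δ hδ N H1 H2
  have hWpos : ∀ s, 0 < W s := fun s => lt_of_lt_of_le one_pos (hW1 s)
  have hVpos : ∀ s, 0 < Vw s := fun s => lt_of_lt_of_le one_pos (hV1 s)
  set u : ℝ → ℝ := fun s => if t₀ ≤ s then W s / W t₀ else Vw s / Vw t₀ with hu
  have hu1 : ∀ t ∈ Set.Ici (0:ℝ), 1 ≤ u t := by
    intro t _
    by_cases hc : t₀ ≤ t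
    · have hut : u t = W t / W t₀ := by rw [hu]; simp [hc]
      rw [hut, le_div_iff₀ (hWpos t₀), one_mul]
      exact hWmono hc
    · have hut : u t = Vw t / Vw t₀ := by rw [hu]; simp [hc]
      rw [hut, le_div_iff₀ (hVpos t₀), one_mul]
      exact hVanti (le_of_not_ge hc)
  have huB : ∀ t ∈ Set.Ici (0:ℝ), u t ≤ 4^N := by
    intro t _
    by_cases hc : t₀ ≤ t
    · have hut : u t = W t / W t₀ := by rw [hu]; simp [hc]
      rw [hut, div_le_iff₀ (hWpos t₀)]
      nlinarith [hWB t, hW1 t₀, pow_pos (by norm_num : (0:ℝ) < 4) N]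
    · have hut : u t = Vw t / Vw t₀ := by rw [hu]; simp [hc]
      rw [hut, div_le_iff₀ (hVpos t₀)]
      nlinarith [hVB t, hV1 t₀, pow_pos (by norm_num : (0:ℝ) < 4) N]
  -- integrability of the vector field along a bounded continuous curve
  have hFint : ∀ x : ℝ → V, ContinuousOn x (Set.Ici 0) →
      (∃ C, ∀ t ∈ Set.Ici (0:ℝ), ‖x t‖ ≤ C) →
      IntegrableOn (fun s => A s (x s) + a s) (Set.Ici (0:ℝ)) := by
    rintro x hx ⟨C, hC⟩
    exact (integrableOn_Ax hA hAint measurableSet_Ici (fun s hs => hs) hx hC).add haI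
  set P : (ℝ → V) → ℝ → V :=
    fun x t => ζ + ∫ s in t₀..(max t 0), (A s (x s) + a s) with hP
  have huIcc : ∀ t : ℝ, Set.uIcc t₀ (max t 0) ⊆ Set.Ici (0:ℝ) := by
    intro t s hs
    have h0 : 0 ≤ min t₀ (max t 0) := le_min ht₀ (le_max_right _ _)
    exact le_trans h0 hs.1
  have hP1 : ∀ x : ℝ → V, ContinuousOn x (Set.Ici 0) →
      (∃ C, ∀ t ∈ Set.Ici (0:ℝ), ‖x t‖ ≤ C) →
      ContinuousOn (P x) (Set.Ici 0) ∧ (∃ C, ∀ t ∈ Set.Ici (0:ℝ), ‖P x t‖ ≤ C) := by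
    intro x hx hxb
    have hFi := hFint x hx hxb
    constructor
    · have hFe : Integrable (Set.indicator (Set.Ici 0) (fun s => A s (x s) + a s)) :=
        (integrable_indicator_iff measurableSet_Ici).2 hFi
      have hprim : Continuous fun r =>
          ∫ s in t₀..r, (Set.indicator (Set.Ici 0) (fun s' => A s' (x s') + a s')) s :=
        hFe.continuous_primitive t₀
      have hcomp : Continuous fun t => ζ +
          ∫ s in t₀..(max t 0), (Set.indicator (Set.Ici 0) (fun s' => A s' (x s') + a s')) s :=
        continuous_const.add (hprim.comp (continuous_id.max continuous_const))
      have heq : P x = fun t => ζ +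
          ∫ s in t₀..(max t 0), (Set.indicator (Set.Ici 0) (fun s' => A s' (x s') + a s')) s := by
        funext t
        show ζ + (∫ s in t₀..(max t 0), (A s (x s) + a s)) = _
        congr 1
        refine intervalIntegral.integral_congr fun s hs => ?_
        exact (Set.indicator_of_mem (huIcc t hs) (fun s' => A s' (x s') + a s')).symm
      rw [heq]
      exact hcomp.continuousOn
    · refine ⟨‖ζ‖ + ∫ s in Set.Ici (0:ℝ), ‖A s (x s) + a s‖, ?_⟩
      intro t _
      rw [hP]
      refine le_trans (norm_add_le _ _) ?_
      have := norm_intvl hFi ht₀ (le_max_right t 0)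
      linarith
  have hP2 : ∀ (x y : ℝ → V) (D : ℝ), ContinuousOn x (Set.Ici 0) →
      (∃ C, ∀ t ∈ Set.Ici (0:ℝ), ‖x t‖ ≤ C) →
      ContinuousOn y (Set.Ici 0) → (∃ C, ∀ t ∈ Set.Ici (0:ℝ), ‖y t‖ ≤ C) →
      0 ≤ D → (∀ s ∈ Set.Ici (0:ℝ), ‖x s - y s‖ ≤ D * u s) →
      ∀ t ∈ Set.Ici (0:ℝ), ‖P x t - P y t‖ ≤ 2/3 * D * u t := by
    rintro x y D hx hxb hy hyb hD hdist t ht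
    have hmax : max t 0 = t := max_eq_left ht
    obtain ⟨Cx, hCx⟩ := hxb
    obtain ⟨Cy, hCy⟩ := hyb
    have hiAx : IntegrableOn (fun s => A s (x s)) (Set.Ici (0:ℝ)) :=
      integrableOn_Ax hA hAint measurableSet_Ici (fun s hs => hs) hx hCx
    have hiAy : IntegrableOn (fun s => A s (y s)) (Set.Ici (0:ℝ)) :=
      integrableOn_Ax hA hAint measurableSet_Ici (fun s hs => hs) hy hCy
    have hsub := huIcc t
    rw [hmax] at hsub
    have hFix : IntegrableOn (fun s => A s (x s) + a s) (Set.Ici (0:ℝ)) := hiAx.add haI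
    have hFiy : IntegrableOn (fun s => A s (y s) + a s) (Set.Ici (0:ℝ)) := hiAy.add haI
    have hIx : IntervalIntegrable (fun s => A s (x s) + a s) volume t₀ t :=
      (hFix.mono_set hsub).intervalIntegrable
    have hIy : IntervalIntegrable (fun s => A s (y s) + a s) volume t₀ t :=
      (hFiy.mono_set hsub).intervalIntegrable
    have hPdiff : P x t - P y t = ∫ s in t₀..t, (A s (x s) - A s (y s)) := by
      show (ζ + ∫ s in t₀..(max t 0), (A s (x s) + a s))
        - (ζ + ∫ s in t₀..(max t 0), (A s (y s) + a s)) = _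
      simp only [hmax]
      rw [show ζ + (∫ s in t₀..t, (A s (x s) + a s)) - (ζ + ∫ s in t₀..t, (A s (y s) + a s))
        = (∫ s in t₀..t, (A s (x s) + a s)) - ∫ s in t₀..t, (A s (y s) + a s) by abel,
        ← intervalIntegral.integral_sub hIx hIy]
      exact intervalIntegral.integral_congr fun s _ => by abel
    rw [hPdiff]
    refine contr_est_fin (fun s => ‖A s‖) hf0 W Vw hW1 hV1 hfWint hfVint hM1 hM2
      t₀ ht₀ D hD u hu _ t ht ?_ ?_
    · exact ((hiAx.mono_set hsub).sub (hiAy.mono_set hsub))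
    · intro s hs
      have hs0 : s ∈ Set.Ici (0:ℝ) := hsub hs
      calc ‖A s (x s) - A s (y s)‖ = ‖A s (x s - y s)‖ := by rw [map_sub]
        _ ≤ ‖A s‖ * ‖x s - y s‖ := (A s).le_opNorm _
        _ ≤ ‖A s‖ * (D * u s) :=
            mul_le_mul_of_nonneg_left (hdist s hs0) (norm_nonneg _)
  obtain ⟨x, hxc, hxb, hxfix⟩ := picard_master P u (4^N) ζ hu1 huB hP1 hP2
  have hFi := hFint x hxc hxb
  have hxeq : ∀ t ∈ Set.Ici (0:ℝ), x t = ζ + ∫ s in t₀..t, (A s (x s) + a s) := by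
    intro t ht
    have h9 := hxfix t ht
    simp only [hP] at h9
    rw [← h9, max_eq_left ht]
  have hIIabc : ∀ c d : ℝ, 0 ≤ c → 0 ≤ d →
      IntervalIntegrable (fun s => A s (x s) + a s) volume c d := by
    intro c d hc hd
    refine (hFi.mono_set ?_).intervalIntegrable
    intro s hs
    exact le_trans (le_min hc hd) hs.1
  have hinteq : ∀ t ∈ Set.Ici (0:ℝ), x t = x 0 + ∫ s in (0:ℝ)..t, (A s (x s) + a s) := by
    intro t ht
    have h1 := hxeq t ht
    have h2 := hxeq 0 Set.self_mem_Ici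
    have h3 : (∫ s in t₀..t, (A s (x s) + a s)) - ∫ s in t₀..(0:ℝ), (A s (x s) + a s)
        = ∫ s in (0:ℝ)..t, (A s (x s) + a s) :=
      intervalIntegral.integral_interval_sub_left (hIIabc t₀ t ht₀ ht) (hIIabc t₀ 0 ht₀ le_rfl)
    rw [h1, h2]
    rw [← h3]
    abel
  have hval : x t₀ = ζ := by
    have := hxeq t₀ ht₀
    rwa [intervalIntegral.integral_same, add_zero] at this
  have hlim : ∃ L, Tendsto x atTop (nhds L) := by
    refine ⟨x 0 + ∫ s in Set.Ioi (0:ℝ), (A s (x s) + a s), ?_⟩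
    have h1 : Tendsto (fun t => ∫ s in (0:ℝ)..t, (A s (x s) + a s)) atTop
        (nhds (∫ s in Set.Ioi (0:ℝ), (A s (x s) + a s))) :=
      MeasureTheory.intervalIntegral_tendsto_integral_Ioi 0
        (hFi.mono_set (fun s hs => Set.mem_Ici.2 (le_of_lt (Set.mem_Ioi.1 hs)))) tendsto_id
    refine (tendsto_const_nhds.add h1).congr' ?_
    filter_upwards [eventually_ge_atTop (0:ℝ)] with t ht
    exact (hinteq t ht).symm
  refine ⟨x, ⟨hxc, hinteq, hval, hxb, hlim⟩, ?_⟩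
  -- uniqueness
  intro y hyc hyeq hyval t ht
  obtain ⟨Cx, hCx⟩ := hxb
  have hxAi : IntegrableOn (fun s => A s (x s)) (Set.Ici (0:ℝ)) :=
    integrableOn_Ax hA hAint measurableSet_Ici (fun s hs => hs) hxc hCx
  set T' : ℝ := max t t₀ with hT'
  have hT'0 : 0 ≤ T' := le_trans ht₀ (le_max_right _ _)
  have htT' : t ∈ Set.Icc (0:ℝ) T' := ⟨ht, le_max_left _ _⟩
  have hsubT : Set.Icc (0:ℝ) T' ⊆ Set.Ici (0:ℝ) := fun s hs => hs.1
  -- integrability of the fields along y on the compact window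
  obtain ⟨Cy, hCy⟩ := isCompact_Icc.exists_bound_of_continuousOn (hyc.mono hsubT)
  have hyAi : IntegrableOn (fun s => A s (y s)) (Set.Icc (0:ℝ) T') :=
    integrableOn_Ax hA hAint measurableSet_Icc hsubT (hyc.mono hsubT) hCy
  have hyFi : IntegrableOn (fun s => A s (y s) + a s) (Set.Icc (0:ℝ) T') :=
    hyAi.add (haI.mono_set hsubT)
  have hIIy : ∀ c d : ℝ, c ∈ Set.Icc (0:ℝ) T' → d ∈ Set.Icc (0:ℝ) T' →
      IntervalIntegrable (fun s => A s (y s) + a s) volume c d := by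
    intro c d hc hd
    refine (hyFi.mono_set ?_).intervalIntegrable
    intro s hs
    constructor
    · exact le_trans (le_min hc.1 hd.1) hs.1
    · exact le_trans hs.2 (max_le hc.2 hd.2)
  have ht₀T' : t₀ ∈ Set.Icc (0:ℝ) T' := ⟨ht₀, le_max_right _ _⟩
  have h0T' : (0:ℝ) ∈ Set.Icc (0:ℝ) T' := ⟨le_rfl, hT'0⟩
  -- anchored form for y on the window
  have hyanch : ∀ r ∈ Set.Icc (0:ℝ) T', y r = ζ + ∫ s in t₀..r, (A s (y s) + a s) := by
    intro r hr
    have h1 := hyeq r hr.1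
    have h2 := hyeq t₀ ht₀
    have h3 : (∫ s in (0:ℝ)..r, (A s (y s) + a s)) - ∫ s in (0:ℝ)..t₀, (A s (y s) + a s)
        = ∫ s in t₀..r, (A s (y s) + a s) :=
      intervalIntegral.integral_interval_sub_left (hIIy 0 r h0T' hr) (hIIy 0 t₀ h0T' ht₀T')
    rw [← hyval, h1, h2]
    rw [← h3]
    abel
  have hxanch : ∀ r ∈ Set.Icc (0:ℝ) T', x r = ζ + ∫ s in t₀..r, (A s (x s) + a s) :=
    fun r hr => hxeq r hr.1
  -- the difference satisfies the integral identity
  have hdiffeq : ∀ r ∈ Set.Icc (0:ℝ) T',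
      y r - x r = ∫ s in t₀..r, (A s (y s) - A s (x s)) := by
    intro r hr
    have hsubr : Set.uIcc t₀ r ⊆ Set.Icc (0:ℝ) T' := by
      intro s hs
      constructor
      · exact le_trans (le_min ht₀ hr.1) hs.1
      · exact le_trans hs.2 (max_le ht₀T'.2 hr.2)
    have hIy' : IntervalIntegrable (fun s => A s (y s) + a s) volume t₀ r :=
      hIIy t₀ r ht₀T' hr
    have hIx' : IntervalIntegrable (fun s => A s (x s) + a s) volume t₀ r :=
      hIIabc t₀ r ht₀ hr.1
    rw [hyanch r hr, hxanch r hr]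
    rw [show ζ + (∫ s in t₀..r, (A s (y s) + a s)) - (ζ + ∫ s in t₀..r, (A s (x s) + a s))
      = (∫ s in t₀..r, (A s (y s) + a s)) - ∫ s in t₀..r, (A s (x s) + a s) by abel,
      ← intervalIntegral.integral_sub hIy' hIx']
    congr 1
    funext s
    abel
  -- bound on the difference on the window
  obtain ⟨DT, hDT⟩ := isCompact_Icc.exists_bound_of_continuousOn
    ((hyc.mono hsubT).sub (hxc.mono hsubT))
  have hDT0 : 0 ≤ DT := le_trans (norm_nonneg _) (hDT 0 h0T')
  -- iteration
  have hiter : ∀ k : ℕ, ∀ r ∈ Set.Icc (0:ℝ) T', ‖y r - x r‖ ≤ (2/3)^k * DT * u r := by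
    intro k
    induction k with
    | zero =>
      intro r hr
      have h1 : ‖y r - x r‖ ≤ DT := hDT r hr
      have h2 := hu1 r hr.1
      simp only [pow_zero, one_mul]
      nlinarith [mul_le_mul_of_nonneg_left h2 hDT0]
    | succ k ih =>
      intro r hr
      have hsubr : Set.uIcc t₀ r ⊆ Set.Icc (0:ℝ) T' := by
        intro s hs
        constructor
        · exact le_trans (le_min ht₀ hr.1) hs.1
        · exact le_trans hs.2 (max_le ht₀T'.2 hr.2)
      rw [hdiffeq r hr]
      have hgb : ∀ s ∈ Set.uIcc t₀ r,
          ‖A s (y s) - A s (x s)‖ ≤ ‖A s‖ * (((2/3)^k * DT) * u s) := by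
        intro s hs
        calc ‖A s (y s) - A s (x s)‖ = ‖A s (y s - x s)‖ := by rw [map_sub]
          _ ≤ ‖A s‖ * ‖y s - x s‖ := (A s).le_opNorm _
          _ ≤ ‖A s‖ * (((2/3)^k * DT) * u s) :=
              mul_le_mul_of_nonneg_left (ih s (hsubr hs)) (norm_nonneg _)
      have hgint : IntegrableOn (fun s => A s (y s) - A s (x s)) (Set.uIcc t₀ r) :=
        (hyAi.mono_set hsubr).sub (hxAi.mono_set (hsubr.trans hsubT))
      have hest := contr_est_fin (fun s => ‖A s‖) hf0 W Vw hW1 hV1 hfWint hfVint hM1 hM2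
        t₀ ht₀ ((2/3)^k * DT) (by positivity) u hu
        (fun s => A s (y s) - A s (x s)) r hr.1 hgint hgb
      calc ‖∫ s in t₀..r, (A s (y s) - A s (x s))‖ ≤ 2/3 * ((2/3)^k * DT) * u r := hest
        _ = (2/3)^(k+1) * DT * u r := by ring
  have htend0 : Tendsto (fun k : ℕ => (2/3:ℝ)^k * DT * u t) atTop (nhds 0) := by
    have h1 : Tendsto (fun k : ℕ => (2/3:ℝ)^k) atTop (nhds 0) :=
      tendsto_pow_atTop_nhds_zero_of_lt_one (by norm_num) (by norm_num)
    simpa using (h1.mul_const DT).mul_const (u t)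
  have hle0 : ‖y t - x t‖ ≤ 0 :=
    ge_of_tendsto htend0 (Filter.Eventually.of_forall fun k => hiter k t htT')
  exact sub_eq_zero.1 (norm_le_zero_iff.1 hle0)

lemma case_top (A : ℝ → (V →L[ℝ] V)) (a : ℝ → V)
    (hA : AEStronglyMeasurable A (volume.restrict (Set.Ici (0:ℝ))))
    (ha : AEStronglyMeasurable a (volume.restrict (Set.Ici (0:ℝ))))
    (hAint : IntegrableOn (fun t => ‖A t‖) (Set.Ici (0:ℝ)))
    (haint : IntegrableOn (fun t => ‖a t‖) (Set.Ici (0:ℝ)))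
    (ζ : V) :
    ∃ x : ℝ → V, (ContinuousOn x (Set.Ici 0) ∧
      (∀ t ∈ Set.Ici (0:ℝ), x t = x 0 + ∫ s in (0:ℝ)..t, (A s (x s) + a s)) ∧
      Tendsto x atTop (nhds ζ) ∧
      (∃ C : ℝ, ∀ t ∈ Set.Ici (0:ℝ), ‖x t‖ ≤ C)) ∧
      ∀ y : ℝ → V, ContinuousOn y (Set.Ici 0) →
        (∀ t ∈ Set.Ici (0:ℝ), y t = y 0 + ∫ s in (0:ℝ)..t, (A s (y s) + a s)) →
        Tendsto y atTop (nhds ζ) → Set.EqOn y x (Set.Ici 0) := by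
  have haI : IntegrableOn a (Set.Ici (0:ℝ)) :=
    Integrable.mono' haint ha (ae_of_all _ fun s => le_refl _)
  have hf0 : ∀ s : ℝ, 0 ≤ ‖A s‖ := fun s => norm_nonneg _
  obtain ⟨δ, hδ, N, H1, H2⟩ := choose_params _ hf0 hAint
  obtain ⟨W, Vw, hWmono, hVanti, hW1, hWB, hV1, hVB, hfWint, hfVint, hM1, hM2⟩ :=
    weight_package _ hf0 hAint δ hδ N H1 H2
  have hFint : ∀ x : ℝ → V, ContinuousOn x (Set.Ici 0) →
      (∃ C, ∀ t ∈ Set.Ici (0:ℝ), ‖x t‖ ≤ C) →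
      IntegrableOn (fun s => A s (x s) + a s) (Set.Ici (0:ℝ)) := by
    rintro x hx ⟨C, hC⟩
    exact (integrableOn_Ax hA hAint measurableSet_Ici (fun s hs => hs) hx hC).add haI
  set P : (ℝ → V) → ℝ → V :=
    fun x t => ζ - ∫ s in Set.Ici (max t 0), (A s (x s) + a s) with hP
  have hsubIci : ∀ t : ℝ, Set.Ici (max t 0) ⊆ Set.Ici (0:ℝ) :=
    fun t s hs => le_trans (le_max_right t 0) hs
  have hP1 : ∀ x : ℝ → V, ContinuousOn x (Set.Ici 0) →
      (∃ C, ∀ t ∈ Set.Ici (0:ℝ), ‖x t‖ ≤ C) →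
      ContinuousOn (P x) (Set.Ici 0) ∧ (∃ C, ∀ t ∈ Set.Ici (0:ℝ), ‖P x t‖ ≤ C) := by
    intro x hx hxb
    have hFi := hFint x hx hxb
    constructor
    · have hFe : Integrable (Set.indicator (Set.Ici 0) (fun s => A s (x s) + a s)) :=
        (integrable_indicator_iff measurableSet_Ici).2 hFi
      have hprim : Continuous fun r =>
          ∫ s in (0:ℝ)..r, (Set.indicator (Set.Ici 0) (fun s' => A s' (x s') + a s')) s :=
        hFe.continuous_primitive 0
      have hcomp : Continuous fun t =>
          (ζ - ∫ s in Set.Ici (0:ℝ), (A s (x s) + a s)) +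
          ∫ s in (0:ℝ)..(max t 0), (Set.indicator (Set.Ici 0) (fun s' => A s' (x s') + a s')) s :=
        continuous_const.add (hprim.comp (continuous_id.max continuous_const))
      have heq : P x = fun t =>
          (ζ - ∫ s in Set.Ici (0:ℝ), (A s (x s) + a s)) +
          ∫ s in (0:ℝ)..(max t 0), (Set.indicator (Set.Ici 0) (fun s' => A s' (x s') + a s')) s := by
        funext t
        show ζ - (∫ s in Set.Ici (max t 0), (A s (x s) + a s)) = _
        have hsplit := split_Ici hFi (le_max_right t 0)
        have hind : ∫ s in (0:ℝ)..(max t 0),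
            (Set.indicator (Set.Ici 0) (fun s' => A s' (x s') + a s')) s
            = ∫ s in (0:ℝ)..(max t 0), (A s (x s) + a s) := by
          refine intervalIntegral.integral_congr fun s hs => ?_
          refine Set.indicator_of_mem ?_ (fun s' => A s' (x s') + a s')
          have h0 : 0 ≤ min 0 (max t 0) := le_min le_rfl (le_max_right t 0)
          exact le_trans h0 hs.1
        rw [hind, hsplit]
        abel
      rw [heq]
      exact hcomp.continuousOn
    · refine ⟨‖ζ‖ + ∫ s in Set.Ici (0:ℝ), ‖A s (x s) + a s‖, ?_⟩
      intro t _
      show ‖ζ - ∫ s in Set.Ici (max t 0), (A s (x s) + a s)‖ ≤ _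
      refine le_trans (norm_sub_le _ _) ?_
      have h1 : ‖∫ s in Set.Ici (max t 0), (A s (x s) + a s)‖
          ≤ ∫ s in Set.Ici (max t 0), ‖A s (x s) + a s‖ :=
        norm_integral_le_integral_norm _
      have h2 : ∫ s in Set.Ici (max t 0), ‖A s (x s) + a s‖
          ≤ ∫ s in Set.Ici (0:ℝ), ‖A s (x s) + a s‖ :=
        MeasureTheory.setIntegral_mono_set hFi.norm
          (Filter.Eventually.of_forall fun s => norm_nonneg _)
          (hsubIci t).eventuallyLE
      linarith
  have hP2 : ∀ (x y : ℝ → V) (D : ℝ), ContinuousOn x (Set.Ici 0) →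
      (∃ C, ∀ t ∈ Set.Ici (0:ℝ), ‖x t‖ ≤ C) →
      ContinuousOn y (Set.Ici 0) → (∃ C, ∀ t ∈ Set.Ici (0:ℝ), ‖y t‖ ≤ C) →
      0 ≤ D → (∀ s ∈ Set.Ici (0:ℝ), ‖x s - y s‖ ≤ D * Vw s) →
      ∀ t ∈ Set.Ici (0:ℝ), ‖P x t - P y t‖ ≤ 2/3 * D * Vw t := by
    rintro x y D hx hxb hy hyb hD hdist t ht
    have hmax : max t 0 = t := max_eq_left ht
    have hFix := hFint x hx hxb
    have hFiy := hFint y hy hyb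
    have hsubt : Set.Ici t ⊆ Set.Ici (0:ℝ) := fun s hs => le_trans (Set.mem_Ici.1 ht) hs
    have hPdiff : P x t - P y t = ∫ s in Set.Ici t, (A s (y s) - A s (x s)) := by
      show (ζ - ∫ s in Set.Ici (max t 0), (A s (x s) + a s))
        - (ζ - ∫ s in Set.Ici (max t 0), (A s (y s) + a s)) = _
      rw [hmax]
      rw [show (ζ - ∫ s in Set.Ici t, (A s (x s) + a s))
        - (ζ - ∫ s in Set.Ici t, (A s (y s) + a s))
        = (∫ s in Set.Ici t, (A s (y s) + a s)) - ∫ s in Set.Ici t, (A s (x s) + a s) by abel,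
        ← MeasureTheory.integral_sub (hFiy.mono_set hsubt) (hFix.mono_set hsubt)]
      refine MeasureTheory.integral_congr_ae (ae_of_all _ fun s => ?_)
      abel
    rw [hPdiff]
    obtain ⟨Cx, hCx⟩ := hxb
    obtain ⟨Cy, hCy⟩ := hyb
    have hiAx : IntegrableOn (fun s => A s (x s)) (Set.Ici (0:ℝ)) :=
      integrableOn_Ax hA hAint measurableSet_Ici (fun s hs => hs) hx hCx
    have hiAy : IntegrableOn (fun s => A s (y s)) (Set.Ici (0:ℝ)) :=
      integrableOn_Ax hA hAint measurableSet_Ici (fun s hs => hs) hy hCy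
    refine contr_est_top (fun s => ‖A s‖) hf0 Vw hV1 hfVint hM2 D hD _ t ht
      ((hiAy.mono_set hsubt).sub (hiAx.mono_set hsubt)) ?_
    intro s hs
    calc ‖A s (y s) - A s (x s)‖ = ‖A s (y s - x s)‖ := by rw [map_sub]
      _ ≤ ‖A s‖ * ‖y s - x s‖ := (A s).le_opNorm _
      _ ≤ ‖A s‖ * (D * Vw s) := by
          rw [norm_sub_rev]
          exact mul_le_mul_of_nonneg_left (hdist s (hsubt hs)) (norm_nonneg _)
  obtain ⟨x, hxc, hxb, hxfix⟩ := picard_master P Vw (4^N) ζ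
    (fun t _ => hV1 t) (fun t _ => hVB t) hP1 hP2
  have hFi := hFint x hxc hxb
  have hxeq : ∀ t ∈ Set.Ici (0:ℝ), x t = ζ - ∫ s in Set.Ici t, (A s (x s) + a s) := by
    intro t ht
    have h9 := hxfix t ht
    simp only [hP] at h9
    rw [← h9, max_eq_left ht]
  have hinteq : ∀ t ∈ Set.Ici (0:ℝ), x t = x 0 + ∫ s in (0:ℝ)..t, (A s (x s) + a s) := by
    intro t ht
    have h1 := hxeq t ht
    have h2 := hxeq 0 Set.self_mem_Ici
    have hsplit := split_Ici hFi ht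
    rw [h1, h2, hsplit]
    abel
  have hlimζ : Tendsto x atTop (nhds ζ) := by
    have htail : Tendsto (fun t => ∫ s in Set.Ici t, (A s (x s) + a s)) atTop (nhds 0) :=
      tail_tendsto hFi
    have h1 : Tendsto (fun t => ζ - ∫ s in Set.Ici t, (A s (x s) + a s)) atTop (nhds ζ) := by
      simpa using tendsto_const_nhds.sub htail
    refine h1.congr' ?_
    filter_upwards [eventually_ge_atTop (0:ℝ)] with t ht
    exact (hxeq t ht).symm
  refine ⟨x, ⟨hxc, hinteq, hlimζ, hxb⟩, ?_⟩
  -- uniqueness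
  intro y hyc hyeq hytend t ht
  obtain ⟨Cx, hCx⟩ := hxb
  have hxAi : IntegrableOn (fun s => A s (x s)) (Set.Ici (0:ℝ)) :=
    integrableOn_Ax hA hAint measurableSet_Ici (fun s hs => hs) hxc hCx
  -- y is bounded on [0,∞)
  have hybdd : ∃ C, ∀ r ∈ Set.Ici (0:ℝ), ‖y r‖ ≤ C := by
    have hev : ∀ᶠ r in atTop, dist (y r) ζ < 1 :=
      hytend (Metric.ball_mem_nhds ζ one_pos)
    obtain ⟨T₀, hT₀⟩ := eventually_atTop.1 hev
    set T : ℝ := max T₀ 0 with hT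
    obtain ⟨Cc, hCc⟩ := isCompact_Icc.exists_bound_of_continuousOn
      (hyc.mono (fun s (hs : s ∈ Set.Icc (0:ℝ) T) => hs.1))
    refine ⟨max Cc (‖ζ‖ + 1), ?_⟩
    intro r hr
    rcases le_total r T with hc | hc
    · exact le_trans (hCc r ⟨hr, hc⟩) (le_max_left _ _)
    · have h1 := hT₀ r (le_trans (le_max_left _ _) hc)
      rw [dist_eq_norm] at h1
      have h2 : ‖y r‖ ≤ ‖y r - ζ‖ + ‖ζ‖ := by
        have := norm_add_le (y r - ζ) ζ
        simpa using this
      refine le_trans ?_ (le_max_right Cc _)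
      linarith
  obtain ⟨Cy, hCy⟩ := hybdd
  have hyAi : IntegrableOn (fun s => A s (y s)) (Set.Ici (0:ℝ)) :=
    integrableOn_Ax hA hAint measurableSet_Ici (fun s hs => hs) hyc hCy
  have hyFi : IntegrableOn (fun s => A s (y s) + a s) (Set.Ici (0:ℝ)) := hyAi.add haI
  -- identify the limit of y and derive the anchored form
  have hytendlim : Tendsto y atTop
      (nhds (y 0 + ∫ s in Set.Ioi (0:ℝ), (A s (y s) + a s))) := by
    have h1 : Tendsto (fun r => ∫ s in (0:ℝ)..r, (A s (y s) + a s)) atTop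
        (nhds (∫ s in Set.Ioi (0:ℝ), (A s (y s) + a s))) :=
      MeasureTheory.intervalIntegral_tendsto_integral_Ioi 0
        (hyFi.mono_set (fun s hs => Set.mem_Ici.2 (le_of_lt (Set.mem_Ioi.1 hs)))) tendsto_id
    refine (tendsto_const_nhds.add h1).congr' ?_
    filter_upwards [eventually_ge_atTop (0:ℝ)] with r hr
    exact (hyeq r hr).symm
  have hζeq : ζ = y 0 + ∫ s in Set.Ioi (0:ℝ), (A s (y s) + a s) :=
    tendsto_nhds_unique hytend hytendlim
  have hyanch : ∀ r ∈ Set.Ici (0:ℝ), y r = ζ - ∫ s in Set.Ici r, (A s (y s) + a s) := by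
    intro r hr
    have h1 := hyeq r hr
    have hsplit := split_Ici hyFi hr
    rw [MeasureTheory.integral_Ici_eq_integral_Ioi] at hsplit
    rw [h1, hζeq, hsplit]
    abel
  -- difference estimate
  have hdiffeq : ∀ r ∈ Set.Ici (0:ℝ),
      y r - x r = ∫ s in Set.Ici r, (A s (x s) - A s (y s)) := by
    intro r hr
    have hsubr : Set.Ici r ⊆ Set.Ici (0:ℝ) := fun s hs => le_trans (Set.mem_Ici.1 hr) hs
    have hFix2 : IntegrableOn (fun s => A s (x s) + a s) (Set.Ici (0:ℝ)) := hxAi.add haI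
    have hFiy2 : IntegrableOn (fun s => A s (y s) + a s) (Set.Ici (0:ℝ)) := hyAi.add haI
    rw [hyanch r hr, hxeq r hr]
    rw [show (ζ - ∫ s in Set.Ici r, (A s (y s) + a s))
      - (ζ - ∫ s in Set.Ici r, (A s (x s) + a s))
      = (∫ s in Set.Ici r, (A s (x s) + a s)) - ∫ s in Set.Ici r, (A s (y s) + a s) by abel,
      ← MeasureTheory.integral_sub (hFix2.mono_set hsubr) (hFiy2.mono_set hsubr)]
    refine MeasureTheory.integral_congr_ae (ae_of_all _ fun s => ?_)
    abel
  set D0 : ℝ := Cy + Cx with hD0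
  have hD00 : 0 ≤ D0 := by
    have h1 := hCy 0 Set.self_mem_Ici
    have h2 := hCx 0 Set.self_mem_Ici
    have h3 := norm_nonneg (y 0)
    have h4 := norm_nonneg (x 0)
    rw [hD0]; linarith
  have hiter : ∀ k : ℕ, ∀ r ∈ Set.Ici (0:ℝ), ‖y r - x r‖ ≤ (2/3)^k * D0 * Vw r := by
    intro k
    induction k with
    | zero =>
      intro r hr
      have h1 : ‖y r - x r‖ ≤ D0 := by
        have := norm_sub_le (y r) (x r)
        have h2 := hCy r hr
        have h3 := hCx r hr
        rw [hD0]; linarith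
      have h2 := hV1 r
      simp only [pow_zero, one_mul]
      nlinarith
    | succ k ih =>
      intro r hr
      have hsubr : Set.Ici r ⊆ Set.Ici (0:ℝ) := fun s hs => le_trans (Set.mem_Ici.1 hr) hs
      rw [hdiffeq r hr]
      have hgb : ∀ s ∈ Set.Ici r,
          ‖A s (x s) - A s (y s)‖ ≤ ‖A s‖ * (((2/3)^k * D0) * Vw s) := by
        intro s hs
        calc ‖A s (x s) - A s (y s)‖ = ‖A s (x s - y s)‖ := by rw [map_sub]
          _ ≤ ‖A s‖ * ‖x s - y s‖ := (A s).le_opNorm _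
          _ ≤ ‖A s‖ * (((2/3)^k * D0) * Vw s) := by
              rw [norm_sub_rev]
              exact mul_le_mul_of_nonneg_left (ih s (hsubr hs)) (norm_nonneg _)
      have hest := contr_est_top (fun s => ‖A s‖) hf0 Vw hV1 hfVint hM2
        ((2/3)^k * D0) (by positivity)
        (fun s => A s (x s) - A s (y s)) r hr
        ((hxAi.mono_set hsubr).sub (hyAi.mono_set hsubr)) hgb
      calc ‖∫ s in Set.Ici r, (A s (x s) - A s (y s))‖
          ≤ 2/3 * ((2/3)^k * D0) * Vw r := hest
        _ = (2/3)^(k+1) * D0 * Vw r := by ring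
  have htend0 : Tendsto (fun k : ℕ => (2/3:ℝ)^k * D0 * Vw t) atTop (nhds 0) := by
    have h1 : Tendsto (fun k : ℕ => (2/3:ℝ)^k) atTop (nhds 0) :=
      tendsto_pow_atTop_nhds_zero_of_lt_one (by norm_num) (by norm_num)
    simpa using (h1.mul_const D0).mul_const (Vw t)
  have hle0 : ‖y t - x t‖ ≤ 0 :=
    ge_of_tendsto htend0 (Filter.Eventually.of_forall fun k => hiter k t ht)
  exact sub_eq_zero.1 (norm_le_zero_iff.1 hle0)

end maincases

/-- Linear ODE on `[0,∞)` with integrable coefficients: for every `ζ ∈ ℝⁿ` and every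
`τ ∈ [0,∞]` (where the boundary condition at `τ = ∞` means `lim_{t→∞} x(t) = ζ`)
there is a unique solution of `ẋ = A(t)x + a(t)`, `x(τ) = ζ`; the solution is
bounded and has a limit at infinity. -/
theorem linear_ode_infinite_horizon
    {n : ℕ}
    (A : ℝ → (EuclideanSpace ℝ (Fin n) →L[ℝ] EuclideanSpace ℝ (Fin n)))
    (a : ℝ → EuclideanSpace ℝ (Fin n))
    (hApc : ∀ T : ℝ, PiecewiseContinuousOn A 0 T)
    (hapc : ∀ T : ℝ, PiecewiseContinuousOn a 0 T)
    (hAint : MeasureTheory.IntegrableOn (fun t => ‖A t‖) (Set.Ici 0))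
    (haint : MeasureTheory.IntegrableOn (fun t => ‖a t‖) (Set.Ici 0))
    (ζ : EuclideanSpace ℝ (Fin n))
    (τ : WithTop ℝ) (hτ : ∀ t : ℝ, τ = (t : WithTop ℝ) → 0 ≤ t) :
    ∃ x : ℝ → EuclideanSpace ℝ (Fin n),
      (ContinuousOn x (Set.Ici 0) ∧
       (∀ t ∈ Set.Ici (0:ℝ), x t = x 0 + ∫ s in (0:ℝ)..t, (A s (x s) + a s)) ∧
       (∀ t : ℝ, τ = (t : WithTop ℝ) → x t = ζ) ∧
       (τ = ⊤ → Filter.Tendsto x Filter.atTop (nhds ζ)) ∧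
       (∃ C : ℝ, ∀ t ∈ Set.Ici (0:ℝ), ‖x t‖ ≤ C) ∧
       (∃ L, Filter.Tendsto x Filter.atTop (nhds L))) ∧
      ∀ y : ℝ → EuclideanSpace ℝ (Fin n),
        (ContinuousOn y (Set.Ici 0) ∧
         (∀ t ∈ Set.Ici (0:ℝ), y t = y 0 + ∫ s in (0:ℝ)..t, (A s (y s) + a s)) ∧
         (∀ t : ℝ, τ = (t : WithTop ℝ) → y t = ζ) ∧
         (τ = ⊤ → Filter.Tendsto y Filter.atTop (nhds ζ))) →
        Set.EqOn y x (Set.Ici 0) := by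
  have hA := pc_aesm hApc
  have ha := pc_aesm hapc
  cases τ with
  | top =>
    obtain ⟨x, ⟨hxc, hinteq, hlim, hxb⟩, huniq⟩ := case_top A a hA ha hAint haint ζ
    refine ⟨x, ⟨hxc, hinteq, ?_, fun _ => hlim, hxb, ⟨ζ, hlim⟩⟩, ?_⟩
    · intro t h
      exact absurd h (by simp)
    · rintro y ⟨hyc, hyeq, _, hytend⟩
      exact huniq y hyc hyeq (hytend rfl)
  | coe t₀ =>
    have ht₀ : 0 ≤ t₀ := hτ t₀ rfl
    obtain ⟨x, ⟨hxc, hinteq, hval, hxb, hlim⟩, huniq⟩ :=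
      case_fin A a hA ha hAint haint ζ t₀ ht₀
    refine ⟨x, ⟨hxc, hinteq, ?_, ?_, hxb, hlim⟩, ?_⟩
    · intro t h
      have h2 : t₀ = t := by exact_mod_cast h
      rw [← h2]
      exact hval
    · intro h
      exact absurd h (by simp)
    · rintro y ⟨hyc, hyeq, hyval, _⟩
      exact huniq y hyc hyeq (hyval t₀ rfl)
end

section
/- In the concave investment model with α ∈ (0,1), K₀ > 0, T fixed with αT − K₀^{1−α} > 0, and switching time τ₂ = αT − K₀^{1−α}, the objective value of the candidate optimal process (u* = 1 on [0,τ₂), u* = 0 on [τ₂,T], K*(t) = ((1−α)t + K₀^{1−α})^{1/(1−α)} on [0,τ₂) and constant K*(τ₂) afterwards) equals ∫_{τ₂}^T K*(τ₂)^α dt = α^{α/(1−α)} · ((1−α)T + K₀^{1−α})^{1/(1−α)}. -/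
open MeasureTheory intervalIntegral Real Set
open scoped Interval

/-- Objective value of the candidate optimal process in the concave investment model:
with switching time `τ₂ = αT - K₀^{1-α}`, control `u* = 1_{[0,τ₂)}` and state
`K*(t) = ((1-α)t + K₀^{1-α})^{1/(1-α)}` on `[0,τ₂)`, constant afterwards, one has
`∫₀^T (1-u*)K*^α dt = ∫_{τ₂}^T K*(τ₂)^α dt = α^{α/(1-α)}·((1-α)T + K₀^{1-α})^{1/(1-α)}`. -/
theorem concave_investment_objective_value
    (α K₀ T : ℝ) (hα : α ∈ Set.Ioo (0:ℝ) 1) (hK₀ : 0 < K₀)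
    (hT : 0 < α * T - K₀ ^ (1 - α))
    (τ₂ : ℝ) (hτ₂ : τ₂ = α * T - K₀ ^ (1 - α))
    (u : ℝ → ℝ) (K : ℝ → ℝ)
    (hu : u = fun t => if t < τ₂ then 1 else 0)
    (hK : K = fun t => if t < τ₂ then ((1 - α) * t + K₀ ^ (1 - α)) ^ (1 / (1 - α))
                       else ((1 - α) * τ₂ + K₀ ^ (1 - α)) ^ (1 / (1 - α))) :
    (∫ t in (0:ℝ)..T, (1 - u t) * K t ^ α) = (∫ t in τ₂..T, K τ₂ ^ α) ∧
    (∫ t in (0:ℝ)..T, (1 - u t) * K t ^ α)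
      = α ^ (α / (1 - α)) * ((1 - α) * T + K₀ ^ (1 - α)) ^ (1 / (1 - α)) := by
  obtain ⟨hα0, hα1⟩ := hα
  have h1α : 0 < 1 - α := by linarith
  have hKp : 0 < K₀ ^ (1 - α) := Real.rpow_pos_of_pos hK₀ _
  have hτ₂pos : 0 < τ₂ := by rw [hτ₂]; exact hT
  have hTpos : 0 < T := by nlinarith
  have hτ₂T : τ₂ < T := by rw [hτ₂]; nlinarith
  set B := (1 - α) * T + K₀ ^ (1 - α) with hB
  have hBpos : 0 < B := by positivity
  set C := ((1 - α) * τ₂ + K₀ ^ (1 - α)) ^ (1 / (1 - α)) with hC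
  have hKτ : K τ₂ = C := by rw [hK]; simp
  have hf : (fun t => (1 - u t) * K t ^ α) = fun t => if t < τ₂ then 0 else C ^ α := by
    funext t
    rw [hu, hK]
    by_cases h : t < τ₂ <;> simp [h]
  rw [hf, hKτ]
  -- a.e. the function is 0 on [0,τ₂]
  have hne : ∀ᵐ t ∂(volume.restrict (Ι (0:ℝ) τ₂)), t ≠ τ₂ := by
    refine ae_restrict_of_ae ?_
    rw [ae_iff]
    convert measure_singleton (μ := volume) τ₂ using 2
    ext t; simp
  have hmem1 : ∀ᵐ t ∂(volume.restrict (Ι (0:ℝ) τ₂)), t ∈ Ι (0:ℝ) τ₂ :=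
    ae_restrict_mem measurableSet_uIoc
  have hae0 : ∀ᵐ t ∂(volume.restrict (Ι (0:ℝ) τ₂)),
      (if t < τ₂ then (0:ℝ) else C ^ α) = 0 := by
    filter_upwards [hne, hmem1] with t ht hmt
    rw [uIoc_of_le hτ₂pos.le] at hmt
    have : t < τ₂ := lt_of_le_of_ne hmt.2 ht
    simp [this]
  have hint1 : IntervalIntegrable (fun t => if t < τ₂ then (0:ℝ) else C ^ α) volume 0 τ₂ :=
    (_root_.intervalIntegrable_const (c := (0:ℝ))).congr_ae (by filter_upwards [hae0] with t ht; rw [ht])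
  -- the function is the constant C^α on [τ₂,T]
  have heq2 : EqOn (fun t => if t < τ₂ then (0:ℝ) else C ^ α) (fun _ => C ^ α) (uIcc τ₂ T) := by
    intro t ht
    rw [uIcc_of_le hτ₂T.le] at ht
    simp [not_lt.2 ht.1]
  have hint2 : IntervalIntegrable (fun t => if t < τ₂ then (0:ℝ) else C ^ α) volume τ₂ T :=
    (_root_.intervalIntegrable_const (c := C ^ α)).congr_ae (by
      filter_upwards [ae_restrict_mem measurableSet_uIoc] with t ht
      exact (heq2 (uIoc_subset_uIcc ht)).symm)
  have hsplit := intervalIntegral.integral_add_adjacent_intervals hint1 hint2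
  have hI1 : (∫ t in (0:ℝ)..τ₂, if t < τ₂ then (0:ℝ) else C ^ α) = 0 :=
    intervalIntegral.integral_zero_ae ((ae_restrict_iff' measurableSet_uIoc).mp hae0)
  have hI2 : (∫ t in τ₂..T, if t < τ₂ then (0:ℝ) else C ^ α) = ∫ t in τ₂..T, C ^ α :=
    intervalIntegral.integral_congr heq2
  have htot : (∫ t in (0:ℝ)..T, if t < τ₂ then (0:ℝ) else C ^ α) = ∫ t in τ₂..T, C ^ α := by
    rw [← hsplit, hI1, hI2, zero_add]
  refine ⟨htot, ?_⟩
  rw [htot, intervalIntegral.integral_const, smul_eq_mul]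
  have harg : (1 - α) * τ₂ + K₀ ^ (1 - α) = α * B := by rw [hτ₂, hB]; ring
  have hCα : C ^ α = α ^ (α / (1 - α)) * B ^ (α / (1 - α)) := by
    rw [hC, harg, ← Real.rpow_mul (by positivity : (0:ℝ) ≤ α * B), one_div_mul_eq_div,
      Real.mul_rpow hα0.le hBpos.le]
  have hTτ : T - τ₂ = B := by rw [hτ₂, hB]; ring
  rw [hTτ, hCα, show (1:ℝ) / (1 - α) = α / (1 - α) + 1 by field_simp; ring,
    Real.rpow_add hBpos, Real.rpow_one]
  ring
end

section
/- In the two-sector model with adjoint equations ṗ(t) = −u*(t)p(t) − (1−u*(t))q(t), p(T) = 0 and q̇(t) = −1, q(T) = 0 on [0,T] with T > 2, the functions q(t) = T−t and p(t) = 2e^{T−(t+2)} for t ∈ [0,T−2), p(t) = (T−t)²/2 for t ∈ [T−2,T], together with u*(t) = 1_{[0,T−2)}(t), satisfy the system, p and q are continuous, p(T−2) = q(T−2) = 2, and p(t) > q(t) on [0,T−2) while p(t) ≤ q(t) on [T−2,T]. -/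
open Real

/-- Verification of the adjoint functions in the two-sector model: with `T > 2`,
`q(t) = T - t`, `p(t) = 2e^{T-(t+2)}` on `[0,T-2)` and `p(t) = (T-t)²/2` on `[T-2,T]`,
and `u*(t) = 1_{[0,T-2)}(t)`, the coupled adjoint system with terminal conditions
`p(T) = q(T) = 0` holds, `p` and `q` are continuous, `p(T-2) = q(T-2) = 2`, and
`p > q` on `[0,T-2)` while `p ≤ q` on `[T-2,T]`. -/
theorem two_sector_adjoint_verification
    (T : ℝ) (hT : 2 < T) (p q u : ℝ → ℝ)
    (hq : q = fun t => T - t)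
    (hp : p = fun t => if t < T - 2 then 2 * exp (T - (t + 2)) else (T - t)^2 / 2)
    (hu : u = fun t => if t < T - 2 then 1 else 0) :
    (∀ t, HasDerivAt q (-1) t) ∧ q T = 0 ∧ p T = 0 ∧
    (∀ t ∈ Set.Ioo 0 T, t ≠ T - 2 →
      HasDerivAt p (-(u t * p t) - (1 - u t) * q t) t) ∧
    Continuous p ∧ Continuous q ∧
    p (T - 2) = 2 ∧ q (T - 2) = 2 ∧
    (∀ t ∈ Set.Ico 0 (T - 2), p t > q t) ∧
    (∀ t ∈ Set.Icc (T - 2) T, p t ≤ q t) := by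
  subst hq hp hu
  refine ⟨?_, ?_, ?_, ?_, ?_, ?_, ?_, ?_, ?_, ?_⟩
  · intro t
    simpa using (hasDerivAt_id t).const_sub T
  · simp
  · dsimp only
    rw [if_neg (by linarith : ¬ T < T - 2)]
    ring
  · intro t ht hne
    rcases lt_or_gt_of_ne hne with h | h
    · -- t < T - 2 : p = 2 * exp (T - (t+2)) locally
      have hloc : (fun s => 2 * exp (T - (s + 2))) =ᶠ[nhds t]
          (fun s => if s < T - 2 then 2 * exp (T - (s + 2)) else (T - s)^2 / 2) := by
        filter_upwards [Iio_mem_nhds h] with s hs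
        rw [if_pos (Set.mem_Iio.mp hs)]
      have hd : HasDerivAt (fun s => 2 * exp (T - (s + 2)))
          (2 * exp (T - (t + 2)) * (-1)) t := by
        have h1 : HasDerivAt (fun s : ℝ => T - (s + 2)) (-1) t := by
          simpa using ((hasDerivAt_id t).add_const 2).const_sub T
        simpa using (h1.exp.const_mul 2)
      have := hd.congr_of_eventuallyEq hloc.symm
      simp only [if_pos h]
      refine this.congr_deriv ?_
      ring
    · -- t > T - 2 : p = (T - s)^2 / 2 locally
      have hloc : (fun s => (T - s)^2 / 2) =ᶠ[nhds t]
          (fun s => if s < T - 2 then 2 * exp (T - (s + 2)) else (T - s)^2 / 2) := by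
        filter_upwards [Ioi_mem_nhds h] with s hs
        rw [if_neg (by exact not_lt.2 (le_of_lt hs))]
      have hd : HasDerivAt (fun s => (T - s)^2 / 2) (-(T - t)) t := by
        have h1 : HasDerivAt (fun s : ℝ => T - s) (-1) t := by
          simpa using (hasDerivAt_id t).const_sub T
        have := (h1.pow 2).div_const 2
        refine this.congr_deriv ?_
        ring
      have := hd.congr_of_eventuallyEq hloc.symm
      simp only [if_neg (not_lt.2 (le_of_lt h))]
      refine this.congr_deriv ?_
      ring
  · -- continuity of p
    have heq : (fun t => if t < T - 2 then 2 * exp (T - (t + 2)) else (T - t)^2 / 2)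
        = (fun t => if T - 2 ≤ t then (T - t)^2 / 2 else 2 * exp (T - (t + 2))) := by
      funext t
      by_cases h : t < T - 2
      · rw [if_pos h, if_neg (not_le.2 h)]
      · rw [if_neg h, if_pos (not_lt.1 h)]
    rw [heq]
    apply Continuous.if_le
    · continuity
    · continuity
    · exact continuous_const
    · exact continuous_id
    · intro x hx
      rw [← hx]
      norm_num
  · continuity
  · dsimp only
    rw [if_neg (lt_irrefl _)]; norm_num
  · norm_num
  · intro t ht
    dsimp only
    rw [if_pos ht.2]
    have hx : 0 < T - 2 - t := by linarith [ht.2]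
    have := Real.add_one_le_exp (T - (t + 2))
    have h2 : 2 * ((T - (t + 2)) + 1) ≤ 2 * exp (T - (t + 2)) := by linarith
    linarith
  · intro t ht
    dsimp only
    rw [if_neg (not_lt.2 ht.1)]
    have h1 : 0 ≤ T - t := by linarith [ht.2]
    have h2 : T - t ≤ 2 := by linarith [ht.1]
    nlinarith
end
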